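/- arXiv:math/0108102 — 4 statements merged into one kernel-verified Lean document; each statement's English description precedes it below -/
import Mathlib

section
/- For all n, r ∈ ℕ there is N(n, r) ∈ ℕ such that for every r' ≤ r, every k ∈ ℕ, and every completely positive map φ : ℂ^k → M_{r'} of strict order at most n, the element φ(e_i) is nonzero for at most N(n, r) of the canonical minimal projections e_i of ℂ^k. One may take N(n,r) = (n+1)·|Λ| where Λ is a finite subcover of the sphere S^{2r-1} by sets U_ξ = {η : |⟨ξ,η⟩| > 1/√2}. -/
open scoped ComplexOrder
open Matrix

-- finite subcover of the sphere by half-balls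
lemma my_cover (m : ℕ) : ∃ Λ : Finset (EuclideanSpace ℂ (Fin m)),
    Metric.sphere (0 : EuclideanSpace ℂ (Fin m)) 1 ⊆ ⋃ ξ ∈ Λ, Metric.ball ξ (1/2) := by
  obtain ⟨t, ht⟩ := (isCompact_sphere (0 : EuclideanSpace ℂ (Fin m)) 1).elim_finite_subcover
    (fun ξ : EuclideanSpace ℂ (Fin m) => Metric.ball ξ (1/2)) (fun ξ => Metric.isOpen_ball)
    (fun η hη => Set.mem_iUnion.2 ⟨η, Metric.mem_ball_self (by norm_num)⟩)
  exact ⟨t, ht⟩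

lemma my_ball_nonorth {m : ℕ} {ξ η η' : EuclideanSpace ℂ (Fin m)} (hη : ‖η‖ = 1)
    (hη' : ‖η'‖ = 1) (h1 : η ∈ Metric.ball ξ (1/2)) (h2 : η' ∈ Metric.ball ξ (1/2)) :
    (inner ℂ η η' : ℂ) ≠ 0 := by
  intro h0
  rw [Metric.mem_ball] at h1 h2
  have hd : ‖η - η'‖ < 1 := by
    have h3 := dist_triangle η ξ η'
    rw [dist_comm ξ η'] at h3
    have : dist η η' < 1 := by linarith
    simpa [dist_eq_norm] using this
  have h1' : (inner ℂ η (η - η') : ℂ) = 1 := by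
    rw [inner_sub_right, h0, sub_zero, inner_self_eq_norm_sq_to_K, hη]
    norm_num
  have := norm_inner_le_norm (𝕜 := ℂ) η (η - η')
  rw [h1'] at this
  simp [hη] at this
  linarith

open Matrix in
lemma my_orth {m : ℕ} {A B : Matrix (Fin m) (Fin m) ℂ} (hA : A.IsHermitian)
    (hAB : A * B = 0) (u v : Fin m → ℂ) :
    (inner ℂ ((WithLp.equiv 2 (Fin m → ℂ)).symm (A *ᵥ u))
      ((WithLp.equiv 2 (Fin m → ℂ)).symm (B *ᵥ v)) : ℂ) = 0 := by
  have h : (inner ℂ ((WithLp.equiv 2 (Fin m → ℂ)).symm (A *ᵥ u))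
      ((WithLp.equiv 2 (Fin m → ℂ)).symm (B *ᵥ v)) : ℂ)
      = star (A *ᵥ u) ⬝ᵥ (B *ᵥ v) := by
    simp [PiLp.inner_apply, dotProduct, mul_comm]
  rw [h, Matrix.star_mulVec, ← Matrix.dotProduct_mulVec, Matrix.mulVec_mulVec, hA.eq, hAB]
  simp

/-- For all `n, r` there is `N(n,r)` such that for every `r' ≤ r`, every `k`, and every
positive (hence completely positive) linear map `φ : ℂ^k → M_{r'}` of strict order at most
`n`, the image `φ(e_i)` of a canonical minimal projection `e_i` of `ℂ^k` is nonzero for at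
most `N(n,r)` indices `i`. -/
theorem stmt2 (n r : ℕ) :
    ∃ N : ℕ, ∀ (r' k : ℕ), r' ≤ r →
      ∀ φ : (Fin k → ℂ) →ₗ[ℂ] Matrix (Fin r') (Fin r') ℂ,
        (∀ x : Fin k → ℂ, (∀ i, 0 ≤ x i) → (φ x).PosSemidef) →
        (∀ g : Fin (n + 2) → Fin k, Function.Injective g →
          ∃ j j', j ≠ j' ∧ φ (Pi.single (g j) 1) * φ (Pi.single (g j') 1) = 0) →
        {i : Fin k | φ (Pi.single i 1) ≠ 0}.ncard ≤ N := by
  classical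
  choose Λ hΛ using my_cover
  refine ⟨(n + 1) * (Finset.range (r + 1)).sup (fun m => (Λ m).card), ?_⟩
  intro r' k hr' φ hpos horder
  set T : Finset (Fin k) := Finset.univ.filter (fun i => φ (Pi.single i 1) ≠ 0) with hT
  have hset : {i : Fin k | φ (Pi.single i 1) ≠ 0} = ↑T := by ext i; simp [hT]
  rw [hset, Set.ncard_coe_finset]
  have hpsd : ∀ i : Fin k, (φ (Pi.single i 1)).PosSemidef := by
    intro i
    refine hpos _ (fun j => ?_)
    rcases eq_or_ne j i with h | h
    · rw [h, Pi.single_eq_same]; exact zero_le_one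
    · rw [Pi.single_eq_of_ne h]
  have hex : ∀ i : Fin k, ∃ u : Fin r' → ℂ,
      φ (Pi.single i 1) ≠ 0 → φ (Pi.single i 1) *ᵥ u ≠ 0 := by
    intro i
    by_cases h : φ (Pi.single i 1) = 0
    · exact ⟨0, fun h' => absurd h h'⟩
    · by_contra hc
      push_neg at hc
      apply h
      ext a b
      have := congrFun (hc (Pi.single b 1)).2 a
      simpa using this
  choose u hu using hex
  set η : Fin k → EuclideanSpace ℂ (Fin r') := fun i =>
    (‖(WithLp.equiv 2 (Fin r' → ℂ)).symm (φ (Pi.single i 1) *ᵥ u i)‖ : ℂ)⁻¹ •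
      (WithLp.equiv 2 (Fin r' → ℂ)).symm (φ (Pi.single i 1) *ᵥ u i) with hηdef
  have hηnorm : ∀ i ∈ T, ‖η i‖ = 1 := by
    intro i hi
    have hne : φ (Pi.single i 1) *ᵥ u i ≠ 0 := hu i (by simpa [hT] using hi)
    have hne' : (WithLp.equiv 2 (Fin r' → ℂ)).symm (φ (Pi.single i 1) *ᵥ u i) ≠ 0 := by
      intro h0
      exact hne (by simpa using congrArg (WithLp.equiv 2 (Fin r' → ℂ)) h0)
    have hpos' : ‖(WithLp.equiv 2 (Fin r' → ℂ)).symm (φ (Pi.single i 1) *ᵥ u i)‖ ≠ 0 :=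
      norm_ne_zero_iff.2 hne'
    rw [hηdef]
    simp only [norm_smul, norm_inv, Complex.norm_real, Real.norm_eq_abs, abs_norm]
    field_simp
  have hηorth : ∀ i j : Fin k, φ (Pi.single i 1) * φ (Pi.single j 1) = 0 →
      (inner ℂ (η i) (η j) : ℂ) = 0 := by
    intro i j hij
    rw [hηdef]
    simp only [inner_smul_left, inner_smul_right]
    rw [my_orth (hpsd i).1 hij]
    simp
  have hmem : ∀ i : Fin k, ∃ ξ, i ∈ T → ξ ∈ Λ r' ∧ η i ∈ Metric.ball ξ (1/2) := by
    intro i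
    by_cases hi : i ∈ T
    · have hs : η i ∈ Metric.sphere (0 : EuclideanSpace ℂ (Fin r')) 1 := by
        simpa [mem_sphere_zero_iff_norm] using hηnorm i hi
      obtain ⟨ξ, hξ1, hξ2⟩ := Set.mem_iUnion₂.1 (hΛ r' hs)
      exact ⟨ξ, fun _ => ⟨hξ1, hξ2⟩⟩
    · exact ⟨0, fun h => absurd h hi⟩
  choose ξ hξ using hmem
  have hmaps : ∀ i ∈ T, ξ i ∈ Λ r' := fun i hi => (hξ i hi).1
  have hfib : ∀ b ∈ Λ r', (T.filter (fun i => ξ i = b)).card ≤ n + 1 := by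
    intro b hb
    by_contra hc
    push_neg at hc
    obtain ⟨s, hsub, hcard⟩ := Finset.exists_subset_card_eq (Nat.succ_le_of_lt hc)
    let e := s.equivFinOfCardEq hcard
    have hginj : Function.Injective (fun j : Fin (n + 2) => ((e.symm j : s) : Fin k)) :=
      fun a b h => e.symm.injective (Subtype.coe_injective h)
    obtain ⟨j, j', hjj, hzero⟩ := horder _ hginj
    have hm : ∀ j₀ : Fin (n + 2), ((e.symm j₀ : s) : Fin k) ∈ T ∧
        ξ ((e.symm j₀ : s) : Fin k) = b := by
      intro j₀
      have := hsub (e.symm j₀).2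
      rw [Finset.mem_filter] at this
      exact ⟨this.1, this.2⟩
    have h1 := hm j
    have h2 := hm j'
    have horthoh := hηorth _ _ hzero
    have hb1 : η ((e.symm j : s) : Fin k) ∈ Metric.ball b (1/2) := by
      have := (hξ _ h1.1).2; rwa [h1.2] at this
    have hb2 : η ((e.symm j' : s) : Fin k) ∈ Metric.ball b (1/2) := by
      have := (hξ _ h2.1).2; rwa [h2.2] at this
    exact my_ball_nonorth (hηnorm _ h1.1) (hηnorm _ h2.1) hb1 hb2 horthoh
  calc T.card ≤ (n + 1) * (Λ r').card :=
        Finset.card_le_mul_card_image_of_maps_to hmaps (n + 1) hfib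
    _ ≤ (n + 1) * (Finset.range (r + 1)).sup (fun m => (Λ m).card) :=
        Nat.mul_le_mul_left _ (Finset.le_sup (f := fun m => (Λ m).card) (Finset.mem_range.2 (Nat.lt_succ_of_le hr')))
end

section
/- Let φ : F → A be a positive contraction from a finite-dimensional C*-algebra F = M_{r_1} ⊕ ⋯ ⊕ M_{r_s} to a C*-algebra A, and let ι : ℂ^s → F be the canonical unital embedding onto the center. Then ord(φ ∘ ι) ≤ ord(φ). -/
open scoped ComplexOrder

/-- `p` is a minimal projection in the `ℂ`-algebra `B`: a nonzero self-adjoint idempotent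
compressing `B` to `ℂ·p`. -/
def IsMinProj {B : Type*} [Ring B] [StarRing B] [Module ℂ B] (p : B) : Prop :=
  p ≠ 0 ∧ p * p = p ∧ star p = p ∧ ∀ x : B, ∃ c : ℂ, p * x * p = c • p

/-- A map `ψ` out of a `ℂ`-algebra `B` has (strict) order at most `n`:
for every family of `n + 2` mutually orthogonal minimal projections of `B`, some pair of
images is orthogonal. -/
def OrdLe {B A : Type*} [Ring B] [StarRing B] [Module ℂ B] [MulZeroClass A]
    (ψ : B → A) (n : ℕ) : Prop :=
  ∀ e : Fin (n + 2) → B, (∀ j, IsMinProj (e j)) →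
    (∀ j j', j ≠ j' → e j * e j' = 0) →
    ∃ j j', j ≠ j' ∧ ψ (e j) * ψ (e j') = 0

namespace Stmt9Aux

open Matrix MvPolynomial

lemma two_pow_add_two_pow {m m' a : ℕ} (h : 2^m + 2^m' = 2^(a+1)) : m = a ∧ m' = a := by
  have key : ∀ x y : ℕ, x < y → 2^x + 2^y ≠ 2^(a+1) := by
    intro x y hxy heq
    have h1 : 2^(x+1) ∣ 2^y := pow_dvd_pow 2 hxy
    have h2 : 2^(x+1) ∣ 2^(a+1) := by
      apply pow_dvd_pow
      have : 2^(x+1) ≤ 2^(a+1) := by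
        calc 2^(x+1) = 2^x + 2^x := by ring
        _ ≤ 2^x + 2^y := by
              have := Nat.pow_le_pow_right (by norm_num : 1 ≤ 2) hxy.le
              omega
        _ = 2^(a+1) := heq
      exact Nat.succ_le_succ (by
        by_contra hc
        push_neg at hc
        have := Nat.pow_lt_pow_right (by norm_num : 1 < 2) (by omega : a + 1 < x + 1)
        omega)
    have h3 : 2^(x+1) ∣ 2^x := by
      have : (2:ℕ)^x = 2^(a+1) - 2^y := by omega
      rw [this]
      exact Nat.dvd_sub h2 h1
    have := Nat.le_of_dvd (by positivity) h3
    have := Nat.pow_lt_pow_right (by norm_num : 1 < 2) (Nat.lt_succ_self x)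
    omega
  have hmm : m = m' := by
    rcases lt_trichotomy m m' with h1 | h1 | h1
    · exact absurd h (key m m' h1)
    · exact h1
    · exact absurd (by omega : 2^m' + 2^m = 2^(a+1)) (key m' m h1)
  subst hmm
  have : 2^(m+1) = 2^(a+1) := by rw [← h]; ring
  have := Nat.pow_right_injective (le_refl 2) this
  omega

lemma vvmul {n : ℕ} (v u : Fin n → ℂ) (X : Matrix (Fin n) (Fin n) ℂ) :
    vecMulVec v u * X = vecMulVec v (X.vecMul u) := by
  ext a b
  simp [Matrix.mul_apply, vecMulVec_apply, Matrix.vecMul, dotProduct, Finset.mul_sum, mul_assoc]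

lemma vvmulvv {n : ℕ} (v u v' w : Fin n → ℂ) :
    vecMulVec v u * vecMulVec v' w = (u ⬝ᵥ v') • vecMulVec v w := by
  ext a b
  simp [Matrix.mul_apply, vecMulVec_apply, dotProduct, Finset.sum_mul]
  apply Finset.sum_congr rfl
  intro c _
  ring

lemma vv_decomp {n : ℕ} (v w : Fin n → ℂ) :
    vecMulVec v w = ∑ m : Fin n, ∑ m' : Fin n,
      (v m * w m') • vecMulVec (Pi.single m 1) (Pi.single m' (1:ℂ)) := by
  ext a b
  simp [vecMulVec_apply, Matrix.sum_apply, Pi.single_apply, mul_ite, ite_mul,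
    Finset.sum_ite_eq, Finset.sum_ite_eq']

lemma one_decomp {n : ℕ} : (1 : Matrix (Fin n) (Fin n) ℂ) =
    ∑ m : Fin n, vecMulVec (Pi.single m 1) (Pi.single m 1) := by
  ext a b
  simp [Matrix.one_apply, Matrix.sum_apply, vecMulVec_apply, Pi.single_apply, mul_ite, ite_mul,
    Finset.sum_ite_eq, Finset.sum_ite_eq']

lemma minProj_pi {s : ℕ} {p : Fin s → ℂ} (hp : IsMinProj p) :
    ∃ k, p = fun i => if i = k then 1 else 0 := by
  obtain ⟨hne, hidem, -, hmin⟩ := hp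
  have hval : ∀ i, p i = 0 ∨ p i = 1 := by
    intro i
    have h := congrFun hidem i
    have : p i * (p i - 1) = 0 := by
      simp only [Pi.mul_apply] at h
      ring_nf
      linear_combination h
    rcases mul_eq_zero.1 this with h1 | h1
    · exact Or.inl h1
    · exact Or.inr (by linear_combination h1)
  have hex : ∃ k, p k ≠ 0 := by
    by_contra hc
    push_neg at hc
    exact hne (funext hc)
  obtain ⟨k, hk⟩ := hex
  have hk1 : p k = 1 := (hval k).resolve_left hk
  refine ⟨k, funext fun i => ?_⟩
  by_cases hik : i = k
  · subst hik; simp [hk1]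
  · simp only [hik, if_false]
    rcases hval i with h1 | h1
    · exact h1
    · exfalso
      obtain ⟨c, hc⟩ := hmin (Pi.single k 1)
      have h2 := congrFun hc k
      have h3 := congrFun hc i
      simp only [Pi.mul_apply, Pi.smul_apply, Pi.single_eq_same, smul_eq_mul] at h2
      simp only [Pi.mul_apply, Pi.smul_apply, smul_eq_mul,
        Pi.single_eq_of_ne hik] at h3
      rw [hk1] at h2
      rw [h1] at h3
      simp at h2 h3
      rw [← h3] at h2
      exact one_ne_zero h2

variable {s : ℕ} {r : Fin s → ℕ}

lemma single_mul_single_ne {k k' : Fin s} (hkk : k ≠ k')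
    (M : Matrix (Fin (r k)) (Fin (r k)) ℂ) (M' : Matrix (Fin (r k')) (Fin (r k')) ℂ) :
    (Pi.single k M : (i : Fin s) → Matrix (Fin (r i)) (Fin (r i)) ℂ) * Pi.single k' M' = 0 := by
  funext i
  simp only [Pi.mul_apply, Pi.zero_apply]
  by_cases h : i = k
  · subst h
    rw [Pi.single_eq_of_ne hkk, mul_zero]
  · rw [Pi.single_eq_of_ne h, zero_mul]

lemma isMinProj_P (k : Fin s) (v : Fin (r k) → ℂ) (m0 : Fin (r k)) (hv : v m0 ≠ 0) :
    IsMinProj (((∑ m, Complex.normSq (v m) : ℝ) : ℂ)⁻¹ •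
      (Pi.single k (vecMulVec v (star v)) : (i : Fin s) → Matrix (Fin (r i)) (Fin (r i)) ℂ)) := by
  set N : ℝ := ∑ m, Complex.normSq (v m) with hNdef
  have hNpos : 0 < N := Finset.sum_pos' (fun m _ => Complex.normSq_nonneg _)
    ⟨m0, Finset.mem_univ _, Complex.normSq_pos.2 hv⟩
  have hNc : ((N : ℝ) : ℂ) ≠ 0 := by exact_mod_cast hNpos.ne'
  have hdot : (star v) ⬝ᵥ v = (N : ℂ) := by
    simp only [dotProduct, Pi.star_apply, hNdef, Complex.ofReal_sum]
    exact Finset.sum_congr rfl fun m _ => by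
      rw [RCLike.star_def, ← Complex.normSq_eq_conj_mul_self]
  refine ⟨?_, ?_, ?_, ?_⟩
  · intro hc
    have h0 := congrFun hc k
    simp only [Pi.smul_apply, Pi.single_eq_same, Pi.zero_apply] at h0
    have h1 := congrFun (congrFun h0 m0) m0
    simp only [Matrix.smul_apply, vecMulVec_apply, Pi.star_apply, Matrix.zero_apply,
      smul_eq_mul] at h1
    rcases mul_eq_zero.1 h1 with h2 | h2
    · exact inv_ne_zero hNc h2
    · rcases mul_eq_zero.1 h2 with h3 | h3
      · exact hv h3
      · exact hv (star_eq_zero.1 h3)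
  · funext i
    simp only [Pi.smul_apply, Pi.mul_apply]
    by_cases h : i = k
    · subst h
      simp only [Pi.single_eq_same]
      rw [smul_mul_smul_comm, vvmulvv, hdot, smul_smul]
      congr 1
      field_simp
    · rw [Pi.single_eq_of_ne h]
      simp
  · funext i
    simp only [Pi.star_apply, Pi.smul_apply]
    by_cases h : i = k
    · subst h
      simp only [Pi.single_eq_same]
      rw [star_smul]
      congr 1
      · simp [star_inv₀, RCLike.star_def, Complex.conj_ofReal]
      · ext a b
        simp [conjTranspose_apply, vecMulVec_apply, mul_comm]
    · rw [Pi.single_eq_of_ne h]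
      simp
  · intro x
    refine ⟨(N : ℂ)⁻¹ * (((x k).vecMul (star v)) ⬝ᵥ v), ?_⟩
    funext i
    simp only [Pi.smul_apply, Pi.mul_apply]
    by_cases h : i = k
    · subst h
      simp only [Pi.single_eq_same]
      rw [smul_mul_assoc, smul_mul_assoc, mul_smul_comm, vvmul, vvmulvv]
      simp only [smul_smul]
      congr 1
      ring
    · rw [Pi.single_eq_of_ne h]
      simp

lemma coeff_term {σ : Type*} [DecidableEq σ] {i j : σ} (hij : i ≠ j) (c : ℝ) (d e D E : ℕ) :
    MvPolynomial.coeff (Finsupp.single i D + Finsupp.single j E)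
      (MvPolynomial.C c * MvPolynomial.X i ^ d * MvPolynomial.X j ^ e) =
      if d = D ∧ e = E then c else 0 := by
  rw [mul_assoc, X_pow_eq_monomial, X_pow_eq_monomial, monomial_mul, C_mul_monomial,
    coeff_monomial]
  rw [show c * (1*1) = c by ring]
  congr 1
  simp only [eq_iff_iff]
  constructor
  · intro h
    constructor
    · have := DFunLike.congr_fun h i
      simpa [Finsupp.single_eq_of_ne hij, Finsupp.single_eq_of_ne (Ne.symm hij)] using this
    · have := DFunLike.congr_fun h j
      simpa [Finsupp.single_eq_of_ne hij, Finsupp.single_eq_of_ne (Ne.symm hij)] using this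
  · rintro ⟨rfl, rfl⟩
    rfl

end Stmt9Aux

open Matrix MvPolynomial Stmt9Aux in
/-- Let `φ : F → A` be a positive contraction from `F = M_{r_1} ⊕ ⋯ ⊕ M_{r_s}` to a
C*-algebra `A`, and `ι : ℂ^s → F` the canonical unital embedding onto the center.
Then `ord (φ ∘ ι) ≤ ord φ`. -/
theorem stmt9 {A : Type*} [NonUnitalNormedRing A] [StarRing A] [CStarRing A]
    [CompleteSpace A] [NormedSpace ℂ A] [IsScalarTower ℂ A A] [SMulCommClass ℂ A A]
    [StarModule ℂ A] [PartialOrder A] [StarOrderedRing A]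
    (s : ℕ) (r : Fin s → ℕ)
    (φ : ((i : Fin s) → Matrix (Fin (r i)) (Fin (r i)) ℂ) →ₗ[ℂ] A)
    (hpos : ∀ x, (∀ i, (x i).PosSemidef) → 0 ≤ φ x)
    (hcontr : ‖φ 1‖ ≤ 1)
    (ι : (Fin s → ℂ) →ₗ[ℂ] ((i : Fin s) → Matrix (Fin (r i)) (Fin (r i)) ℂ))
    (hι : ∀ (v : Fin s → ℂ) (i : Fin s), ι v i = v i • 1) :
    ∀ n : ℕ, OrdLe φ n → OrdLe (fun v => φ (ι v)) n := by
  intro n hφ e hmin horth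
  -- classification of the minimal projections of ℂ^s
  choose kk hkk using fun j => minProj_pi (hmin j)
  have hq : ∀ j, ι (e j) =
      fun i => if i = kk j then (1 : Matrix (Fin (r i)) (Fin (r i)) ℂ) else 0 := by
    intro j
    funext i
    rw [hι (e j) i, hkk j]
    by_cases h : i = kk j <;> simp [h]
  have hkinj : ∀ j j', j ≠ j' → kk j ≠ kk j' := by
    intro j j' hjj hc
    have h0 := congrFun (horth j j' hjj) (kk j)
    rw [Pi.mul_apply, hkk j, hkk j'] at h0
    simp [← hc] at h0
  by_cases hz : ∃ j, r (kk j) = 0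
  · -- degenerate case : a block of size zero, the corresponding image is zero
    obtain ⟨j, hj⟩ := hz
    have hz0 : ι (e j) = 0 := by
      rw [hq j]
      funext i
      by_cases h : i = kk j
      · subst h
        simp only [if_pos rfl, Pi.zero_apply]
        apply Matrix.ext
        intro a b
        exact absurd a.2 (by omega)
      · simp [h]
    obtain ⟨j', hj'⟩ := exists_ne j
    exact ⟨j, j', Ne.symm hj', by show φ (ι (e j)) * φ (ι (e j')) = 0; rw [hz0, map_zero, zero_mul]⟩
  push_neg at hz
  by_contra hcon
  push_neg at hcon
  -- matrix units
  set F := (i : Fin s) → Matrix (Fin (r i)) (Fin (r i)) ℂ with hF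
  set E : (k : Fin s) → Fin (r k) → Fin (r k) → F := fun k m m' =>
    Pi.single k (vecMulVec (Pi.single m 1) (Pi.single m' 1)) with hE
  have hdecomp : ∀ j, ι (e j) = ∑ m : Fin (r (kk j)), E (kk j) m m := by
    intro j
    rw [hq j]
    funext i
    rw [Finset.sum_apply]
    by_cases h : i = kk j
    · subst h
      simp only [if_pos rfl, hE, Pi.single_eq_same]
      exact one_decomp
    · simp only [h, if_false, hE]
      rw [Finset.sum_eq_zero]
      intro m _
      rw [Pi.single_eq_of_ne h]
  -- for each ordered pair, some diagonal cross term is nonzero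
  have hpair : ∀ i j, i ≠ j → ∃ m : Fin (r (kk i)), ∃ l : Fin (r (kk j)),
      φ (E (kk i) m m) * φ (E (kk j) l l) ≠ 0 := by
    intro i j hij
    by_contra hc
    push_neg at hc
    apply hcon i j hij
    rw [hdecomp i, hdecomp j, map_sum, map_sum, Finset.sum_mul_sum]
    apply Finset.sum_eq_zero
    intro m _
    apply Finset.sum_eq_zero
    intro l _
    exact hc m l
  choose mh lh hml using hpair
  -- dual functionals
  have hfun : ∀ i j (h : i ≠ j), ∃ g : A →L[ℝ] ℝ,
      g (φ (E (kk i) (mh i j h) (mh i j h)) * φ (E (kk j) (lh i j h) (lh i j h))) ≠ 0 := by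
    intro i j h
    obtain ⟨g, -, hg⟩ := exists_dual_vector ℝ _ (norm_ne_zero_iff.2 (hml i j h))
    refine ⟨g, ?_⟩
    rw [hg]
    exact norm_ne_zero_iff.2 (hml i j h)
  choose g hg using hfun
  -- the polynomials
  set P : ∀ i j : Fin (n+2), i ≠ j → MvPolynomial (Fin (n+2)) ℝ := fun i j h =>
    ∑ m : Fin (r (kk i)), ∑ l : Fin (r (kk j)), ∑ m' : Fin (r (kk i)), ∑ l' : Fin (r (kk j)),
      MvPolynomial.C (g i j h (φ (E (kk i) m m') * φ (E (kk j) l l'))) *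
        MvPolynomial.X i ^ (2^(m:ℕ) + 2^(m':ℕ)) * MvPolynomial.X j ^ (2^(l:ℕ) + 2^(l':ℕ))
    with hP
  have hPne : ∀ i j (h : i ≠ j), P i j h ≠ 0 := by
    intro i j h hzero
    apply hg i j h
    have hco := congrArg (MvPolynomial.coeff
      (Finsupp.single i (2^((mh i j h : ℕ)+1)) + Finsupp.single j (2^((lh i j h : ℕ)+1)))) hzero
    rw [MvPolynomial.coeff_zero] at hco
    rw [← hco, hP]
    simp only [MvPolynomial.coeff_sum, coeff_term h]
    rw [Finset.sum_eq_single (mh i j h)]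
    rotate_left
    · intro m _ hm
      apply Finset.sum_eq_zero; intro m' _
      apply Finset.sum_eq_zero; intro l _
      apply Finset.sum_eq_zero; intro l' _
      rw [if_neg]
      rintro ⟨h1, -⟩
      exact hm (Fin.ext (two_pow_add_two_pow h1).1)
    · intro habs
      exact absurd (Finset.mem_univ _) habs
    rw [Finset.sum_eq_single (lh i j h)]
    rotate_left
    · intro l _ hl
      apply Finset.sum_eq_zero; intro m' _
      apply Finset.sum_eq_zero; intro l' _
      rw [if_neg]
      rintro ⟨-, h2⟩
      exact hl (Fin.ext (two_pow_add_two_pow h2).1)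
    · intro habs
      exact absurd (Finset.mem_univ _) habs
    rw [Finset.sum_eq_single (mh i j h)]
    rotate_left
    · intro m' _ hm'
      apply Finset.sum_eq_zero; intro l' _
      rw [if_neg]
      rintro ⟨h1, -⟩
      exact hm' (Fin.ext (two_pow_add_two_pow h1).2)
    · intro habs
      exact absurd (Finset.mem_univ _) habs
    rw [Finset.sum_eq_single (lh i j h)]
    rotate_left
    · intro l' _ hl'
      rw [if_neg]
      rintro ⟨-, h2⟩
      exact hl' (Fin.ext (two_pow_add_two_pow h2).2)
    · intro habs
      exact absurd (Finset.mem_univ _) habs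
    rw [if_pos]
    constructor <;> · rw [pow_succ]; ring
  -- the master polynomial and a good evaluation point
  set Q : MvPolynomial (Fin (n+2)) ℝ :=
    (∏ j0 : Fin (n+2), MvPolynomial.X j0) *
      ∏ pr : Fin (n+2) × Fin (n+2), (if h : pr.1 ≠ pr.2 then P pr.1 pr.2 h else 1) with hQ
  have hQne : Q ≠ 0 := by
    apply mul_ne_zero
    · exact Finset.prod_ne_zero_iff.2 fun j0 _ => MvPolynomial.X_ne_zero j0
    · exact Finset.prod_ne_zero_iff.2 fun pr _ => by
        by_cases h : pr.1 ≠ pr.2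
        · rw [dif_pos h]; exact hPne pr.1 pr.2 h
        · rw [dif_neg h]; exact one_ne_zero
  have hx : ∃ x : Fin (n+2) → ℝ, MvPolynomial.eval x Q ≠ 0 := by
    by_contra hc
    push_neg at hc
    exact hQne (MvPolynomial.funext fun x => by rw [map_zero]; exact hc x)
  obtain ⟨x, hx⟩ := hx
  rw [hQ, _root_.map_mul, _root_.map_prod, _root_.map_prod] at hx
  have hxj : ∀ j0 : Fin (n+2), x j0 ≠ 0 := by
    intro j0
    have h1 := (mul_ne_zero_iff.1 hx).1
    intro hc
    apply h1
    apply Finset.prod_eq_zero (Finset.mem_univ j0)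
    rw [MvPolynomial.eval_X, hc]
  have hPx : ∀ i j (h : i ≠ j), MvPolynomial.eval x (P i j h) ≠ 0 := by
    intro i j h hc
    apply (mul_ne_zero_iff.1 hx).2
    apply Finset.prod_eq_zero (Finset.mem_univ (i, j))
    rw [dif_pos h]
    exact hc
  -- the generic projections
  set v : ∀ j : Fin (n+2), Fin (r (kk j)) → ℂ := fun j m => (x j : ℂ) ^ (2^(m:ℕ)) with hv
  set N : Fin (n+2) → ℝ := fun j => ∑ m, Complex.normSq (v j m) with hN
  set w : Fin (n+2) → F := fun j => Pi.single (kk j) (vecMulVec (v j) (star (v j))) with hw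
  have hNpos : ∀ j, 0 < N j := fun j =>
    Finset.sum_pos' (fun m _ => Complex.normSq_nonneg _)
      ⟨⟨0, Nat.pos_of_ne_zero (hz j)⟩, Finset.mem_univ _,
        Complex.normSq_pos.2 (pow_ne_zero _ (Complex.ofReal_ne_zero.2 (hxj j)))⟩
  set Pr : Fin (n+2) → F := fun j => ((N j : ℝ) : ℂ)⁻¹ • w j with hPr
  have hminP : ∀ j, IsMinProj (Pr j) := fun j =>
    isMinProj_P (kk j) (v j) ⟨0, Nat.pos_of_ne_zero (hz j)⟩
      (pow_ne_zero _ (Complex.ofReal_ne_zero.2 (hxj j)))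
  have horthP : ∀ j j', j ≠ j' → Pr j * Pr j' = 0 := by
    intro j j' hjj
    rw [hPr]
    simp only [smul_mul_smul_comm]
    rw [hw]
    simp only [single_mul_single_ne (hkinj j j' hjj)]
    rw [smul_zero]
  obtain ⟨j, j', hjj, hPP⟩ := hφ Pr hminP horthP
  -- conclude : the product of the images of w j and w j' vanishes
  have hwz : φ (w j) * φ (w j') = 0 := by
    rw [hPr] at hPP
    simp only [_root_.map_smul, smul_mul_smul_comm] at hPP
    have hne : (((N j : ℝ) : ℂ)⁻¹ * ((N j' : ℝ) : ℂ)⁻¹) ≠ 0 := by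
      apply mul_ne_zero <;>
        exact inv_ne_zero (by exact_mod_cast (hNpos _).ne')
    have h2 := congrArg (fun y => (((N j : ℝ) : ℂ)⁻¹ * ((N j' : ℝ) : ℂ)⁻¹)⁻¹ • y) hPP
    simp only [smul_smul, smul_zero] at h2
    rw [inv_mul_cancel₀ hne, one_smul] at h2
    exact h2
  -- expand w as a combination of matrix units
  have hwdec : ∀ j0, φ (w j0) = ∑ m : Fin (r (kk j0)), ∑ m' : Fin (r (kk j0)),
      ((x j0 ^ (2^(m:ℕ) + 2^(m':ℕ)) : ℝ) : ℂ) • φ (E (kk j0) m m') := by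
    intro j0
    rw [hw]
    simp only []
    rw [vv_decomp]
    have hsingle : (Pi.single (kk j0)
        (∑ m : Fin (r (kk j0)), ∑ m' : Fin (r (kk j0)),
          ((v j0 m * star (v j0) m')) • vecMulVec (Pi.single m 1) (Pi.single m' 1)) : F) =
        ∑ m : Fin (r (kk j0)), ∑ m' : Fin (r (kk j0)),
          (v j0 m * star (v j0) m') • (Pi.single (kk j0)
            (vecMulVec (Pi.single m 1) (Pi.single m' 1)) : F) := by
      funext i
      simp only [Finset.sum_apply, Pi.smul_apply]
      by_cases hik : i = kk j0
      · subst hik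
        simp only [Pi.single_eq_same]
      · simp only [Pi.single_eq_of_ne hik, smul_zero, Finset.sum_const_zero]
    rw [hsingle, map_sum]
    apply Finset.sum_congr rfl
    intro m _
    rw [map_sum]
    apply Finset.sum_congr rfl
    intro m' _
    rw [_root_.map_smul]
    congr 1
    simp only [hv, Pi.star_apply, ← Complex.ofReal_pow, RCLike.star_def, Complex.conj_ofReal]
    push_cast
    ring
  -- final contradiction with the evaluation of P j j'
  apply hPx j j' hjj
  have heval : MvPolynomial.eval x (P j j' hjj) = g j j' hjj (φ (w j) * φ (w j')) := by
    rw [hwdec j, hwdec j']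
    simp only [Finset.sum_mul_sum, smul_mul_smul_comm, ← Complex.ofReal_mul,
      Complex.coe_smul, map_sum, _root_.map_smul, smul_eq_mul,
      hP, _root_.map_mul, eval_C, eval_X, map_pow]
    apply Finset.sum_congr rfl; intro m _
    apply Finset.sum_congr rfl; intro l _
    apply Finset.sum_congr rfl; intro m' _
    apply Finset.sum_congr rfl; intro l' _
    push_cast
    ring
  rw [heval, hwz, map_zero]
end

section
/- Let φ₁ : M_{r_1} → A₁ and φ₂ : M_{r_2} → A₂ be completely positive contractions of strict order zero between C*-algebras. Then the induced completely positive map φ₁ ⊗ φ₂ : M_{r_1} ⊗ M_{r_2} → A₁ ⊗ A₂ has strict order zero. -/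
open scoped ComplexOrder TensorProduct

/-- `φ` is completely positive, expressed via sums `Σ_{i,j} c_i* φ(a_i* a_j) c_j ≥ 0`. -/
def IsCPMap {B A : Type*} [Ring B] [StarRing B] [NonUnitalRing A] [StarRing A]
    [PartialOrder A] (φ : B → A) : Prop :=
  ∀ (k : ℕ) (a : Fin k → B) (c : Fin k → A),
    0 ≤ ∑ i, ∑ j, star (c i) * φ (star (a i) * a j) * c j

section MatrixAux
variable {n : Type*} [Fintype n] [DecidableEq n]

/-- inner product -/
noncomputable def inn (v w : n → ℂ) : ℂ := ∑ m, star (v m) * w m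

/-- outer product `v w*` -/
noncomputable def outod (v w : n → ℂ) : Matrix n n ℂ := Matrix.vecMulVec v (star w)

lemma outod_apply (v w : n → ℂ) (a b : n) : outod v w a b = v a * star (w b) := by
  simp [outod, Matrix.vecMulVec_apply]

lemma outod_mul_outod (v w x y : n → ℂ) :
    outod v w * outod x y = inn w x • outod v y := by
  ext a b
  simp only [inn, Matrix.mul_apply, outod_apply, Matrix.smul_apply, smul_eq_mul,
    Finset.sum_mul]
  exact Finset.sum_congr rfl fun m _ => by ring

lemma star_outod (v w : n → ℂ) : star (outod v w) = outod w v := by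
  ext a b
  rw [Matrix.star_apply, outod_apply, outod_apply, star_mul', star_star]
  ring

lemma inn_conj (v w : n → ℂ) : star (inn v w) = inn w v := by
  simp only [inn, star_sum, star_mul', star_star]
  exact Finset.sum_congr rfl fun m _ => by ring

lemma inn_self_nonneg (v : n → ℂ) : 0 ≤ inn v v :=
  Finset.sum_nonneg fun m _ => star_mul_self_nonneg (v m)

lemma inn_self_star (v : n → ℂ) : star (inn v v) = inn v v := inn_conj v v

lemma inn_self_ne_zero {v : n → ℂ} (hv : v ≠ 0) : inn v v ≠ 0 := by
  intro h
  apply hv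
  funext m
  have h1 : ∀ i ∈ Finset.univ, (0:ℂ) ≤ star (v i) * v i :=
    fun i _ => star_mul_self_nonneg (v i)
  have h2 := (Finset.sum_eq_zero_iff_of_nonneg h1).mp h m (Finset.mem_univ m)
  have := (CStarRing.star_mul_self_eq_zero_iff (v m)).mp h2
  simpa using this

lemma outod_eq_zero_iff {v : n → ℂ} : outod v v = 0 ↔ v = 0 := by
  constructor
  · intro h
    funext a
    have := congrFun (congrFun h a) a
    rw [outod_apply] at this
    have : v a * star (v a) = 0 := this
    exact (CStarRing.mul_star_self_eq_zero_iff (v a)).mp this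
  · rintro rfl; ext a b; simp [outod_apply]

lemma outod_conj (v : n → ℂ) (x : Matrix n n ℂ) :
    outod v v * x * outod v v = (∑ p, ∑ q, star (v p) * x p q * v q) • outod v v := by
  ext a b
  simp only [Matrix.mul_apply, outod_apply, Matrix.smul_apply, smul_eq_mul,
    Finset.sum_mul, Finset.mul_sum]
  rw [Finset.sum_comm]
  refine Finset.sum_congr rfl fun p _ => ?_
  refine Finset.sum_congr rfl fun q _ => ?_
  ring

lemma smul_outod_isMinProj {v : n → ℂ} (hv : v ≠ 0) :
    IsMinProj ((inn v v)⁻¹ • outod v v) := by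
  have hivv := inn_self_ne_zero hv
  refine ⟨?_, ?_, ?_, ?_⟩
  · intro h
    rcases smul_eq_zero.mp h with h | h
    · exact (inv_ne_zero hivv) h
    · exact hv (outod_eq_zero_iff.mp h)
  · rw [smul_mul_smul_comm, outod_mul_outod, smul_smul]
    congr 1
    field_simp
  · rw [star_smul, star_outod]
    congr 1
    rw [star_inv₀, inn_self_star]
  · intro x
    set c := (inn v v)⁻¹
    set S := ∑ p, ∑ q, star (v p) * x p q * v q
    refine ⟨c * S, ?_⟩
    calc (c • outod v v) * x * (c • outod v v)
        = (c*c) • (outod v v * x * outod v v) := by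
          rw [smul_mul_assoc, smul_mul_assoc, mul_smul_comm, smul_smul]
      _ = (c*c) • (S • outod v v) := by rw [outod_conj]
      _ = ((c*S)*c) • outod v v := by rw [smul_smul]; congr 1; ring
      _ = (c*S) • (c • outod v v) := by rw [smul_smul]

lemma inn_add_left (u u' y : n → ℂ) : inn (u + u') y = inn u y + inn u' y := by
  simp only [inn, Pi.add_apply, star_add, add_mul, Finset.sum_add_distrib]

lemma inn_add_right (u y y' : n → ℂ) : inn u (y + y') = inn u y + inn u y' := by
  simp only [inn, Pi.add_apply, mul_add, Finset.sum_add_distrib]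

lemma inn_smul_left (c : ℂ) (u y : n → ℂ) : inn (c • u) y = star c * inn u y := by
  simp only [inn, Pi.smul_apply, smul_eq_mul, star_mul', Finset.mul_sum]
  exact Finset.sum_congr rfl fun m _ => by ring

lemma inn_smul_right (c : ℂ) (u y : n → ℂ) : inn u (c • y) = c * inn u y := by
  simp only [inn, Pi.smul_apply, smul_eq_mul, Finset.mul_sum]
  exact Finset.sum_congr rfl fun m _ => by ring

lemma inn_comb {v w : n → ℂ} (hvw : inn v w = 0) (hwv : inn w v = 0) (c₁ c₂ d₁ d₂ : ℂ) :
    inn (c₁•v + c₂•w) (d₁•v + d₂•w)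
      = star c₁ * d₁ * inn v v + star c₂ * d₂ * inn w w := by
  simp only [inn_add_left, inn_add_right, inn_smul_left, inn_smul_right, hvw, hwv,
    mul_zero, add_zero, zero_add]
  ring

lemma outod_lin (c₁ c₂ : ℂ) (v w : n → ℂ) :
    outod (c₁•v + c₂•w) (c₁•v + c₂•w)
      = (c₁ * star c₁) • outod v v + (c₁ * star c₂) • outod v w
        + (c₂ * star c₁) • outod w v + (c₂ * star c₂) • outod w w := by
  ext a b
  simp only [outod_apply, Pi.add_apply, Pi.smul_apply, smul_eq_mul, star_add, star_mul',
    Matrix.add_apply, Matrix.smul_apply]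
  ring

lemma ne_zero_of_inn_ne {v : n → ℂ} (h : inn v v ≠ 0) : v ≠ 0 := by
  rintro rfl
  exact h (by simp [inn])

lemma outod_add_right (x y y' : n → ℂ) : outod x (y + y') = outod x y + outod x y' := by
  ext a b
  simp only [outod_apply, Pi.add_apply, star_add, Matrix.add_apply]
  ring

lemma outod_smul_right (c : ℂ) (x y : n → ℂ) : outod x (c • y) = star c • outod x y := by
  ext a b
  simp only [outod_apply, Pi.smul_apply, smul_eq_mul, star_mul', Matrix.smul_apply]
  ring

lemma single_ne_zero' (i : n) : (Pi.single i 1 : n → ℂ) ≠ 0 := by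
  intro h
  have := congrFun h i
  simp at this

lemma inn_single_self (i : n) : inn (Pi.single i 1 : n → ℂ) (Pi.single i 1) = 1 := by
  simp [inn, Pi.single_apply]

lemma inn_single_ne {i j : n} (h : i ≠ j) :
    inn (Pi.single i 1 : n → ℂ) (Pi.single j 1) = 0 := by
  simp only [inn, Pi.single_apply]
  refine Finset.sum_eq_zero fun m _ => ?_
  by_cases hm : m = i
  · subst hm
    have : ¬ m = j := h
    simp [this]
  · simp [hm]

lemma one_eq_sum_outod : (1 : Matrix n n ℂ) = ∑ k, outod (Pi.single k 1) (Pi.single k 1) := by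
  ext a b
  rw [Matrix.sum_apply]
  simp only [outod_apply, Pi.single_apply]
  by_cases hab : a = b
  · subst hab
    rw [Matrix.one_apply_eq, Finset.sum_eq_single a]
    · simp
    · intro k _ hk
      have : ¬ a = k := fun hh => hk hh.symm
      simp [this]
    · intro hmem; exact absurd (Finset.mem_univ a) hmem
  · rw [Matrix.one_apply_ne hab, Finset.sum_eq_zero]
    intro k _
    by_cases hk : a = k
    · have : ¬ b = k := fun hh => hab (hk.trans hh.symm)
      simp [this]
    · simp [hk]

lemma outod_single_eq_std (i j : n) :
    outod (Pi.single i 1 : n → ℂ) (Pi.single j 1) = Matrix.single i j 1 := by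
  ext a b
  simp only [outod_apply, Pi.single_apply, Matrix.single, Matrix.of_apply]
  by_cases ha : a = i
  · by_cases hb : b = j
    · subst ha; subst hb; simp
    · have : ¬ j = b := fun hh => hb hh.symm
      simp [ha, hb, this]
  · have : ¬ i = a := fun hh => ha hh.symm
    simp [ha, this]

end MatrixAux

section CStarAux
variable {A : Type*} [CStarAlgebra A] [PartialOrder A] [StarOrderedRing A]

lemma auxSmulNonneg {y : A} (h : 0 ≤ y) {r : ℝ} (hr : 0 ≤ r) : 0 ≤ r • y := by
  have h2 := CFC.sqrt_mul_sqrt_self y h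
  have h3 : (0:A) ≤ CFC.sqrt y := CFC.sqrt_nonneg y
  calc (0:A) ≤ star (Real.sqrt r • CFC.sqrt y) * (Real.sqrt r • CFC.sqrt y) :=
        star_mul_self_nonneg _
  _ = r • y := by
      rw [star_smul, star_trivial, smul_mul_smul_comm, Real.mul_self_sqrt hr,
        (IsSelfAdjoint.of_nonneg h3).star_eq, h2]

lemma auxSmulLeOne {y : A} (h : 0 ≤ y) {r : ℝ} (hr : r ≤ 1) : r • y ≤ y := by
  have h1 : (0:A) ≤ (1 - r) • y := auxSmulNonneg h (by linarith)
  have h2 : (1 - r) • y = y - r • y := by rw [sub_smul, one_smul]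
  rw [h2] at h1
  exact sub_nonneg.mp h1

omit [PartialOrder A] [StarOrderedRing A] in
lemma auxSaSqZero {x : A} (hx : IsSelfAdjoint x) (h2 : x * x = 0) : x = 0 := by
  have hn : ‖x‖ * ‖x‖ = 0 := by
    rw [← CStarRing.norm_star_mul_self (x := x), hx.star_eq, h2, norm_zero]
  simpa using norm_eq_zero.mp (mul_self_eq_zero.mp hn)

lemma auxSaOfConj {y : A} (h : ∀ c : A, 0 ≤ star c * y * c) : IsSelfAdjoint y := by
  set d := y - star y with hd
  have h1 : ∀ c : A, star c * d * c = 0 := by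
    intro c
    have hsa : IsSelfAdjoint (star c * y * c) := IsSelfAdjoint.of_nonneg (h c)
    have e : star (star c * y * c) = star c * star y * c := by simp [star_mul, mul_assoc]
    have e2 : star c * star y * c = star c * y * c := by rw [← e, hsa.star_eq]
    simp [hd, mul_sub, sub_mul, e2]
  have h2 : ∀ a b : A, star a * d * b = 0 := by
    intro a b
    have e1 := h1 (a + b)
    have e2 := h1 (a + Complex.I • b)
    have ha := h1 a
    have hb := h1 b
    have f1 : star a * d * b + star b * d * a = 0 := by
      have expand : star (a+b) * d * (a+b)
          = star a * d * a + (star a * d * b + star b * d * a) + star b * d * b := by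
        simp [star_add, add_mul, mul_add]; abel
      rw [e1, ha, hb] at expand
      simpa using expand.symm
    have f2 : Complex.I • (star a * d * b) - Complex.I • (star b * d * a) = 0 := by
      have hsb : star (Complex.I • b) = (-Complex.I) • star b := by
        simp [star_smul, Complex.star_def, Complex.conj_I]
      have expand : star (a + Complex.I • b) * d * (a + Complex.I • b)
          = star a * d * a + Complex.I • (star a * d * b)
            + (-Complex.I) • (star b * d * a)
            + (-Complex.I) • (Complex.I • (star b * d * b)) := by
        rw [star_add, hsb]
        simp [add_mul, mul_add, mul_smul_comm, smul_mul_assoc, smul_smul]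
        abel
      rw [e2, ha, hb] at expand
      have : Complex.I • (star a * d * b) + (-Complex.I) • (star b * d * a) = 0 := by
        simpa using expand.symm
      simpa [neg_smul, sub_eq_add_neg] using this
    have f2' : star a * d * b - star b * d * a = 0 := by
      have := congrArg (fun z => (-Complex.I) • z) f2
      simp only [smul_sub, smul_smul, neg_mul, Complex.I_mul_I, smul_zero] at this
      simpa [neg_neg, one_smul] using this
    have hba : star b * d * a = star a * d * b := (sub_eq_zero.mp f2').symm
    rw [hba] at f1
    have h2s : (2:ℂ) • (star a * d * b) = 0 := by rw [two_smul]; exact f1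
    exact (smul_eq_zero.mp h2s).resolve_left two_ne_zero
  have h3 : ∀ b : A, star d * d * b = 0 := fun b => h2 d b
  have h4 : (star d * d) * (star d * d) = 0 := by
    have := h3 (star d * d)
    simpa [mul_assoc] using this
  have h5 : star d * d = 0 := by
    refine auxSaSqZero ?_ h4
    simpa [mul_assoc] using IsSelfAdjoint.star_mul_self d
  have h6 : d = 0 := (CStarRing.star_mul_self_eq_zero_iff d).mp h5
  have : y - star y = 0 := h6
  exact (sub_eq_zero.mp this).symm

lemma auxNonnegOfConj {y : A} (h : ∀ c : A, 0 ≤ star c * y * c) : 0 ≤ y := by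
  have hy : IsSelfAdjoint y := auxSaOfConj h
  set n := y⁻ with hn
  have hnn : (0:A) ≤ n := CFC.negPart_nonneg y
  have hnsa : IsSelfAdjoint n := IsSelfAdjoint.of_nonneg hnn
  have hpsn : y⁺ - n = y := CFC.posPart_sub_negPart y hy
  have hnp : n * y⁺ = 0 := CFC.negPart_mul_posPart y
  have h1 : 0 ≤ n * y * n := by simpa [hnsa.star_eq] using h n
  have h2 : n * y * n = -(n * n * n) := by
    rw [← hpsn, mul_sub, sub_mul, hnp, zero_mul, zero_sub]
  have h3 : 0 ≤ n * n * n := by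
    set s := CFC.sqrt n with hs
    have hss : s * s = n := CFC.sqrt_mul_sqrt_self n hnn
    have hsa : IsSelfAdjoint s := IsSelfAdjoint.of_nonneg (CFC.sqrt_nonneg n)
    have e : n * n * n = star (s*s*s) * (s*s*s) := by
      rw [star_mul, star_mul, hsa.star_eq, ← hss]
      simp [mul_assoc]
    rw [e]; exact star_mul_self_nonneg _
  have h4 : n * n * n = 0 := by
    rw [h2] at h1
    exact le_antisymm (neg_nonneg.mp h1) h3
  have h5 : n * n = 0 := by
    have hsann : IsSelfAdjoint (n*n) := by
      have : star (n*n) = n*n := by rw [star_mul, hnsa.star_eq]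
      exact this
    refine auxSaSqZero hsann ?_
    calc n*n*(n*n) = n*n*n*n := by simp [mul_assoc]
    _ = 0 := by rw [h4, zero_mul]
  have h6 : n = 0 := auxSaSqZero hnsa h5
  rw [← hpsn, h6, sub_zero]
  exact CFC.posPart_nonneg y

end CStarAux

section PhiSection
variable {A : Type*} [CStarAlgebra A] [PartialOrder A] [StarOrderedRing A]
variable {n : Type*} [Fintype n] [DecidableEq n]
variable {φ : Matrix n n ℂ →ₗ[ℂ] A}

lemma smul_cancelC {t : ℂ} (ht : t ≠ 0) {x y : A} (h : t • x = t • y) : x = y := by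
  have := congrArg (fun z => t⁻¹ • z) h
  simpa [smul_smul, inv_mul_cancel₀ ht] using this

lemma cp1 (hcp : IsCPMap φ) (x : Matrix n n ℂ) (c : A) :
    0 ≤ star c * φ (star x * x) * c := by
  simpa using hcp 1 (fun _ => x) (fun _ => c)

lemma cp2 (hcp : IsCPMap φ) (a₀ a₁ : Matrix n n ℂ) (c₀ c₁ : A) :
    0 ≤ star c₀ * φ (star a₀ * a₀) * c₀ + star c₀ * φ (star a₀ * a₁) * c₁
      + (star c₁ * φ (star a₁ * a₀) * c₀ + star c₁ * φ (star a₁ * a₁) * c₁) := by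
  simpa [Fin.sum_univ_two] using hcp 2 ![a₀, a₁] ![c₀, c₁]

lemma hozO (hoz : ∀ e f, IsMinProj e → IsMinProj f → e * f = 0 → φ e * φ f = 0)
    {v w : n → ℂ} (hv : v ≠ 0) (hw : w ≠ 0) (hvw : inn v w = 0) :
    φ (outod v v) * φ (outod w w) = 0 := by
  have hiv := inn_self_ne_zero hv
  have hiw := inn_self_ne_zero hw
  have hprod : ((inn v v)⁻¹ • outod v v) * ((inn w w)⁻¹ • outod w w) = 0 := by
    rw [smul_mul_smul_comm, outod_mul_outod, hvw, zero_smul, smul_zero]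
  have h := hoz _ _ (smul_outod_isMinProj hv) (smul_outod_isMinProj hw) hprod
  rw [map_smul, map_smul, smul_mul_smul_comm] at h
  rcases smul_eq_zero.mp h with h | h
  · exact absurd h (mul_ne_zero (inv_ne_zero hiv) (inv_ne_zero hiw))
  · exact h

lemma sa_outer (hcp : IsCPMap φ) (w : n → ℂ) : IsSelfAdjoint (φ (outod w w)) := by
  by_cases hw : w = 0
  · subst hw
    rw [outod_eq_zero_iff.mpr rfl, map_zero]
    exact (star_zero A : star (0:A) = 0)
  · have ht := inn_self_ne_zero hw
    have hcone : ∀ c : A, 0 ≤ star c * (inn w w • φ (outod w w)) * c := by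
      intro c
      have h1 := cp1 hcp (outod w w) c
      rwa [star_outod, outod_mul_outod, map_smul] at h1
    have sa := auxSaOfConj hcone
    have : inn w w • star (φ (outod w w)) = inn w w • φ (outod w w) := by
      have := sa.star_eq
      rwa [star_smul, inn_self_star] at this
    exact smul_cancelC ht this

lemma phi_one_nonneg (hcp : IsCPMap φ) : 0 ≤ φ 1 := by
  refine auxNonnegOfConj fun c => ?_
  simpa using cp1 hcp 1 c

lemma phi_star_outer (hcp : IsCPMap φ) (v w : n → ℂ) :
    star (φ (outod v w)) = φ (outod w v) := by
  have k1 : outod (v+w) (v+w) = outod v v + outod v w + outod w v + outod w w := by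
    ext a b
    simp only [outod_apply, Pi.add_apply, star_add, Matrix.add_apply]
    ring
  have k2 : outod (v + Complex.I • w) (v + Complex.I • w)
      = outod v v + (-Complex.I) • outod v w + Complex.I • outod w v + outod w w := by
    ext a b
    simp only [outod_apply, Pi.add_apply, Pi.smul_apply, star_add, star_mul', smul_eq_mul,
      Matrix.add_apply, Matrix.smul_apply, Complex.star_def, Complex.conj_I, map_mul]
    ring_nf
    rw [Complex.I_sq]
    ring
  set E := φ (outod v v)
  set F := φ (outod w w)
  set P := φ (outod v w)
  set Q := φ (outod w v)
  have hE : star E = E := (sa_outer hcp v).star_eq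
  have hF : star F = F := (sa_outer hcp w).star_eq
  have s1 : star (E + P + Q + F) = E + P + Q + F := by
    have := (sa_outer hcp (v+w)).star_eq
    rwa [k1, map_add, map_add, map_add] at this
  have s2 : star (E + (-Complex.I) • P + Complex.I • Q + F)
      = E + (-Complex.I) • P + Complex.I • Q + F := by
    have := (sa_outer hcp (v + Complex.I • w)).star_eq
    rwa [k2, map_add, map_add, map_add, map_smul, map_smul] at this
  have eq1 : star P + star Q = P + Q := by
    have h := s1
    rw [star_add, star_add, star_add, hE, hF] at h
    have h2 : (star P + star Q) - (P + Q)
        = (E + star P + star Q + F) - (E + P + Q + F) := by abel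
    rw [h, sub_self] at h2
    exact sub_eq_zero.mp h2
  have hsI : star (Complex.I) = -Complex.I := by simp [Complex.star_def, Complex.conj_I]
  have hsnI : star (-Complex.I) = Complex.I := by simp [Complex.star_def, Complex.conj_I]
  have eq2 : Complex.I • star P + (-Complex.I) • star Q
      = (-Complex.I) • P + Complex.I • Q := by
    have h := s2
    rw [star_add, star_add, star_add, star_smul, star_smul, hE, hF, hsI, hsnI] at h
    have h2 : (Complex.I • star P + (-Complex.I) • star Q) - ((-Complex.I) • P + Complex.I • Q)
        = (E + Complex.I • star P + (-Complex.I) • star Q + F)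
          - (E + (-Complex.I) • P + Complex.I • Q + F) := by abel
    rw [h, sub_self] at h2
    exact sub_eq_zero.mp h2
  have c1 : (-Complex.I) * Complex.I = 1 := by
    rw [neg_mul, Complex.I_mul_I, neg_neg]
  have c2 : (-Complex.I) * (-Complex.I) = -1 := by
    rw [neg_mul_neg, Complex.I_mul_I]
  have eq2' : star P - star Q = -P + Q := by
    have h := congrArg (fun z => (-Complex.I) • z) eq2
    simp only [smul_add, smul_smul, c1, c2, one_smul, neg_one_smul] at h
    rw [sub_eq_add_neg]
    exact h
  have e3 : star P + star P = Q + Q := by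
    have h2 : (star P + star Q) + (star P - star Q) = (P + Q) + (-P + Q) := by
      rw [eq1, eq2']
    calc star P + star P = (star P + star Q) + (star P - star Q) := by abel
    _ = (P + Q) + (-P + Q) := h2
    _ = Q + Q := by abel
  have : (2:ℂ) • star P = (2:ℂ) • Q := by
    rw [two_smul, two_smul]; exact e3
  exact smul_cancelC two_ne_zero this


lemma cpZero (hcp : IsCPMap ⇑φ) (hc : ‖φ 1‖ ≤ 1) (v x : n → ℂ) (c : A)
    (h0 : star c * (φ (outod v v) * c) = 0) :
    star c * φ (outod v x) = 0 := by
  set B := φ (outod v x) with hB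
  have hsB : φ (outod x v) = star B := (phi_star_outer hcp v x).symm
  have raw := cp2 hcp (outod x v) 1 c (-(star B * c))
  rw [star_outod, outod_mul_outod, map_smul] at raw
  simp only [one_mul, mul_one, star_one, hsB, ← hB, mul_assoc, mul_neg, neg_mul, neg_neg,
    star_neg, star_mul, star_star, mul_smul_comm, smul_mul_assoc] at raw
  rw [h0, smul_zero, zero_add] at raw
  set P := star c * (B * (star B * c)) with hP
  set T := star c * (B * (φ 1 * (star B * c))) with hT
  have hPnn : (0:A) ≤ P := by
    have := mul_star_self_nonneg (star c * B)
    rw [star_mul, star_star] at this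
    simpa [mul_assoc] using this
  have hTP : T ≤ P := by
    have hb := CStarAlgebra.star_right_conjugate_le_norm_smul (a := star c * B) (b := φ 1)
      (IsSelfAdjoint.of_nonneg (phi_one_nonneg hcp))
    rw [star_mul, star_star] at hb
    have hb2 : star c * B * (φ 1) * (star B * c) ≤ ‖φ 1‖ • P := by
      simpa [mul_assoc] using hb
    have hb3 : ‖φ 1‖ • P ≤ P := auxSmulLeOne hPnn hc
    calc T = star c * B * (φ 1) * (star B * c) := by simp [hT, mul_assoc]
    _ ≤ ‖φ 1‖ • P := hb2
    _ ≤ P := hb3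
  have hraw2 : (0:A) ≤ -P + (-P + T) := raw
  have hle : -P + (-P + T) ≤ -P := by
    have := add_le_add_right (add_le_add_right hTP (-P)) (-P)
    calc -P + (-P + T) ≤ -P + (-P + P) := this
    _ = -P := by abel
  have hP0 : P = 0 := le_antisymm (neg_nonneg.mp (hraw2.trans hle)) hPnn
  have hz : (star c * B) * star (star c * B) = 0 := by
    rw [star_mul, star_star]
    simpa [mul_assoc] using hP0
  exact (CStarRing.mul_star_self_eq_zero_iff _).mp hz

lemma A3left (hcp : IsCPMap ⇑φ) (hc : ‖φ 1‖ ≤ 1)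
    (hoz : ∀ e f, IsMinProj e → IsMinProj f → e * f = 0 → φ e * φ f = 0)
    {v w : n → ℂ} (hv : v ≠ 0) (hw : w ≠ 0) (hvw : inn v w = 0) (x : n → ℂ) :
    φ (outod w w) * φ (outod v x) = 0 := by
  have hwv : inn w v = 0 := by rw [← inn_conj, hvw, star_zero]
  have hF : star (φ (outod w w)) = φ (outod w w) := (sa_outer hcp w).star_eq
  have h0 : star (φ (outod w w)) * (φ (outod v v) * φ (outod w w)) = 0 := by
    rw [hF, ← mul_assoc, hozO hoz hw hv hwv, zero_mul]
  have := cpZero hcp hc v x (φ (outod w w)) h0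
  rwa [hF] at this

lemma A3right (hcp : IsCPMap ⇑φ) (hc : ‖φ 1‖ ≤ 1)
    (hoz : ∀ e f, IsMinProj e → IsMinProj f → e * f = 0 → φ e * φ f = 0)
    {v w : n → ℂ} (hv : v ≠ 0) (hw : w ≠ 0) (hvw : inn v w = 0) (x : n → ℂ) :
    φ (outod x v) * φ (outod w w) = 0 := by
  have h := A3left hcp hc hoz hv hw hvw x
  have := congrArg star h
  rwa [star_mul, phi_star_outer hcp, phi_star_outer hcp, star_zero] at this

lemma A4 (hcp : IsCPMap ⇑φ) (hc : ‖φ 1‖ ≤ 1)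
    (hoz : ∀ e f, IsMinProj e → IsMinProj f → e * f = 0 → φ e * φ f = 0)
    {v w : n → ℂ} (hv : v ≠ 0) (hw : w ≠ 0) (hvw : inn v w = 0) (x y : n → ℂ) :
    φ (outod x v) * φ (outod w y) = 0 := by
  have hc0 : star (star (φ (outod x v))) * (φ (outod w w) * star (φ (outod x v))) = 0 := by
    rw [star_star, ← mul_assoc, A3right hcp hc hoz hv hw hvw x, zero_mul]
  have := cpZero hcp hc w y (star (φ (outod x v))) hc0
  rwa [star_star] at this

lemma corner_prod (E Z Zs F : A) (hEF : E*F = 0) (hFE : F*E = 0) (hZZ : Z*Z = 0)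
    (hZsZs : Zs*Zs = 0) (hEZs : E*Zs = 0) (hZE : Z*E = 0) (hFZ : F*Z = 0) (hZsF : Zs*F = 0)
    (d1 d2 d3 d4 c1 c2 c3 c4 : ℂ) :
    (d1•E + d2•Z + d3•Zs + d4•F) * (c1•E + c2•Z + c3•Zs + c4•F)
      = (d1*c1)•(E*E) + (d1*c2)•(E*Z) + (d2*c3)•(Z*Zs) + (d2*c4)•(Z*F)
        + (d3*c1)•(Zs*E) + (d3*c2)•(Zs*Z) + (d4*c3)•(F*Zs) + (d4*c4)•(F*F) := by
  simp only [add_mul, mul_add, smul_mul_assoc, mul_smul_comm, smul_smul, hEF, hFE, hZZ,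
    hZsZs, hEZs, hZE, hFZ, hZsF, smul_zero, add_zero, zero_add]
  module

lemma A56 (hcp : IsCPMap ⇑φ) (hc : ‖φ 1‖ ≤ 1)
    (hoz : ∀ e f, IsMinProj e → IsMinProj f → e * f = 0 → φ e * φ f = 0)
    {v w : n → ℂ} (hv : v ≠ 0) (hw : w ≠ 0) (hvw : inn v w = 0) :
    inn w w • (φ (outod v v) * φ (outod v w)) = inn v v • (φ (outod v w) * φ (outod w w))
    ∧ (inn w w * inn v v) • (φ (outod v w) * φ (outod w v))
        = (inn w w * inn w w) • (φ (outod v v) * φ (outod v v)) := by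
  have hwv : inn w v = 0 := by rw [← inn_conj, hvw, star_zero]
  set t := inn v v with hts_def
  set s := inn w w with hss_def
  have htne : t ≠ 0 := inn_self_ne_zero hv
  have hsne : s ≠ 0 := inn_self_ne_zero hw
  have ht0 : 0 ≤ t := inn_self_nonneg v
  have hs0 : 0 ≤ s := inn_self_nonneg w
  have htpos : 0 < t := ht0.lt_of_ne' htne
  have hspos : 0 < s := hs0.lt_of_ne' hsne
  have hstne : s + t ≠ 0 := ne_of_gt (add_pos hspos htpos)
  have hts' : star t = t := inn_self_star v
  have hss' : star s = s := inn_self_star w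
  set E := φ (outod v v) with hE_def
  set Z := φ (outod v w) with hZ_def
  set Zs := φ (outod w v) with hZs_def
  set F := φ (outod w w) with hF_def
  -- zero products
  have hEF : E * F = 0 := hozO hoz hv hw hvw
  have hFE : F * E = 0 := hozO hoz hw hv hwv
  have hZZ : Z * Z = 0 := A4 hcp hc hoz hw hv hwv v w
  have hZsZs : Zs * Zs = 0 := A4 hcp hc hoz hv hw hvw w v
  have hEZs : E * Zs = 0 := A3left hcp hc hoz hw hv hwv v
  have hZE : Z * E = 0 := A3right hcp hc hoz hw hv hwv v
  have hFZ : F * Z = 0 := A3left hcp hc hoz hv hw hvw w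
  have hZsF : Zs * F = 0 := A3right hcp hc hoz hv hw hvw w
  have hsZ : star Z = Zs := by rw [hZ_def, hZs_def, phi_star_outer hcp]
  have hsE : star E = E := (sa_outer hcp v).star_eq
  have hsF : star F = F := (sa_outer hcp w).star_eq
  -- expansion of phi on combinations
  have phiExpand : ∀ c₁ c₂ : ℂ, φ (outod (c₁•v + c₂•w) (c₁•v + c₂•w))
      = (c₁ * star c₁) • E + (c₁ * star c₂) • Z + (c₂ * star c₁) • Zs + (c₂ * star c₂) • F := by
    intro c₁ c₂
    rw [outod_lin, map_add, map_add, map_add, map_smul, map_smul, map_smul, map_smul]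
  -- the four vectors
  have horth : ∀ c₁ c₂ d₁ d₂ : ℂ, star c₁ * d₁ * t + star c₂ * d₂ * s = 0 →
      (c₁ * star c₁ * t + c₂ * star c₂ * s ≠ 0) → (d₁ * star d₁ * t + d₂ * star d₂ * s ≠ 0) →
      φ (outod (c₁•v + c₂•w) (c₁•v + c₂•w)) * φ (outod (d₁•v + d₂•w) (d₁•v + d₂•w)) = 0 := by
    intro c₁ c₂ d₁ d₂ ho hc1 hd1
    refine hozO hoz ?_ ?_ ?_
    · refine ne_zero_of_inn_ne ?_
      rw [inn_comb hvw hwv]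
      intro hz
      exact hc1 (by rw [← hz]; ring)
    · refine ne_zero_of_inn_ne ?_
      rw [inn_comb hvw hwv]
      intro hz
      exact hd1 (by rw [← hz]; ring)
    · rw [inn_comb hvw hwv, ho]
  have cancel0 : ∀ (c : ℂ), c ≠ 0 → ∀ x : A, c • x = 0 → x = 0 := by
    intro c hcne x hx
    exact smul_cancelC hcne (x := x) (y := 0) (by rw [hx, smul_zero])
  have stI : star Complex.I = -Complex.I := by simp [Complex.star_def, Complex.conj_I]
  have htsne2 : t + s ≠ 0 := by
    intro h; apply hstne; rw [add_comm] at h; exact h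
  -- coefficient computations
  have k0 : (1:ℂ) * star (1:ℂ) = 1 := by simp
  have k4' : Complex.I * star Complex.I = 1 := by
    rw [stI]; linear_combination (-1:ℂ) * Complex.I_mul_I
  have kA : (1:ℂ) * star Complex.I = -Complex.I := by rw [stI, one_mul]
  have kB : Complex.I * star (1:ℂ) = Complex.I := by simp
  have m1 : (-s) * star (-s) = s*s := by rw [star_neg, hss']; ring
  have m2 : (-s) * star t = -(s*t) := by rw [hts']; ring
  have m3 : t * star (-s) = -(s*t) := by rw [star_neg, hss']; ring
  have m4 : t * star t = t*t := by rw [hts']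
  have k1 : (Complex.I*s) * star (Complex.I*s) = s*s := by
    rw [star_mul', stI, hss']; linear_combination (-(s*s)) * Complex.I_mul_I
  have k2 : (Complex.I*s) * star t = Complex.I*(s*t) := by rw [hts']; ring
  have k3 : t * star (Complex.I*s) = -(Complex.I*(s*t)) := by
    rw [star_mul', stI, hss']; ring
  -- canonical expansions
  have G1 : φ (outod ((1:ℂ)•v + (1:ℂ)•w) ((1:ℂ)•v + (1:ℂ)•w))
      = (1:ℂ)•E + (1:ℂ)•Z + (1:ℂ)•Zs + (1:ℂ)•F := by
    rw [phiExpand]; simp only [k0]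
  have Gb1 : φ (outod ((-s)•v + t•w) ((-s)•v + t•w))
      = (s*s)•E + (-(s*t))•Z + (-(s*t))•Zs + (t*t)•F := by
    rw [phiExpand, m1, m2, m3, m4]
  have G2 : φ (outod ((1:ℂ)•v + Complex.I•w) ((1:ℂ)•v + Complex.I•w))
      = (1:ℂ)•E + (-Complex.I)•Z + Complex.I•Zs + (1:ℂ)•F := by
    rw [phiExpand, k0, kA, kB, k4']
  have Gb2 : φ (outod ((Complex.I*s)•v + t•w) ((Complex.I*s)•v + t•w))
      = (s*s)•E + (Complex.I*(s*t))•Z + (-(Complex.I*(s*t)))•Zs + (t*t)•F := by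
    rw [phiExpand, k1, k2, k3, m4]
  -- orthogonality of the pairs
  have o1 : star (1:ℂ) * (-s) * t + star (1:ℂ) * t * s = 0 := by
    rw [star_one]; ring
  have o1' : star (-s) * 1 * t + star t * 1 * s = 0 := by
    rw [star_neg, hss', hts']; ring
  have o2 : star (1:ℂ) * (Complex.I*s) * t + star Complex.I * t * s = 0 := by
    rw [star_one, stI]; ring
  have o2' : star (Complex.I*s) * 1 * t + star t * Complex.I * s = 0 := by
    rw [star_mul', stI, hss', hts']; ring
  -- nonvanishing
  have na : (1:ℂ) * star (1:ℂ) * t + (1:ℂ) * star (1:ℂ) * s ≠ 0 := by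
    simpa using htsne2
  have nb1 : (-s) * star (-s) * t + t * star t * s ≠ 0 := by
    have e : (-s) * star (-s) * t + t * star t * s = s*t*(s+t) := by
      rw [star_neg, hss', hts']; ring
    rw [e]; exact mul_ne_zero (mul_ne_zero hsne htne) hstne
  have na2 : (1:ℂ) * star (1:ℂ) * t + Complex.I * star Complex.I * s ≠ 0 := by
    have e : (1:ℂ) * star (1:ℂ) * t + Complex.I * star Complex.I * s = t + s := by
      rw [star_one, k4']; ring
    rw [e]; exact htsne2
  have nb2 : (Complex.I*s) * star (Complex.I*s) * t + t * star t * s ≠ 0 := by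
    have e : (Complex.I*s) * star (Complex.I*s) * t + t * star t * s = s*t*(s+t) := by
      rw [k1, hts']; ring
    rw [e]; exact mul_ne_zero (mul_ne_zero hsne htne) hstne
  -- the four relations
  have R1 := horth 1 1 (-s) t o1 na nb1
  rw [G1, Gb1, corner_prod E Z Zs F hEF hFE hZZ hZsZs hEZs hZE hFZ hZsF] at R1
  have R2 := horth (-s) t 1 1 o1' nb1 na
  rw [Gb1, G1, corner_prod E Z Zs F hEF hFE hZZ hZsZs hEZs hZE hFZ hZsF] at R2
  have R3 := horth 1 Complex.I (Complex.I*s) t o2 na2 nb2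
  rw [G2, Gb2, corner_prod E Z Zs F hEF hFE hZZ hZsZs hEZs hZE hFZ hZsF] at R3
  have R4 := horth (Complex.I*s) t 1 Complex.I o2' nb2 na2
  rw [Gb2, G2, corner_prod E Z Zs F hEF hFE hZZ hZsZs hEZs hZE hFZ hZsF] at R4
  -- combine
  have hIW : Complex.I • ((s*(t+s))•(E*Z) - (t*(t+s))•(Z*F)
      + (s*(s+t))•(Zs*E) - (t*(s+t))•(F*Zs)) = 0 := by
    linear_combination (norm := module) R3 - R4
  have hW : (s*(t+s))•(E*Z) - (t*(t+s))•(Z*F)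
      + (s*(s+t))•(Zs*E) - (t*(s+t))•(F*Zs) = 0 :=
    cancel0 _ Complex.I_ne_zero _ hIW
  have hJ5 : ((s+t)*2)•(s•(E*Z) - t•(Z*F)) = 0 := by
    linear_combination (norm := module) hW - R1 + R2
  have hA5d : s•(E*Z) - t•(Z*F) = 0 :=
    cancel0 _ (mul_ne_zero hstne two_ne_zero) _ hJ5
  have hJ5' : ((s+t)*2)•(s•(Zs*E) - t•(F*Zs)) = 0 := by
    linear_combination (norm := module) hW + R1 - R2
  have hA5sd : s•(Zs*E) - t•(F*Zs) = 0 :=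
    cancel0 _ (mul_ne_zero hstne two_ne_zero) _ hJ5'
  have hiii2 : (2:ℂ)•((s*s)•(E*E) + (t*t)•(F*F) - (s*t)•(Z*Zs) - (s*t)•(Zs*Z)) = 0 := by
    linear_combination (norm := module) R1 + R2 + (t-s)•hA5d + (t-s)•hA5sd
  have hiii' : (s*s)•(E*E) + (t*t)•(F*F) - (s*t)•(Z*Zs) - (s*t)•(Zs*Z) = 0 :=
    cancel0 _ two_ne_zero _ hiii2
  have hXeq : (s*t)•(Z*Zs) - (s*s)•(E*E) = (t*t)•(F*F) - (s*t)•(Zs*Z) := by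
    linear_combination (norm := module) -hiii'
  have z1 : (Z*Zs)*(F*F) = 0 := by
    rw [mul_assoc Z Zs (F*F), ← mul_assoc Zs F F, hZsF, zero_mul, mul_zero]
  have z2 : (Z*Zs)*(Zs*Z) = 0 := by
    rw [mul_assoc Z Zs (Zs*Z), ← mul_assoc Zs Zs Z, hZsZs, zero_mul, mul_zero]
  have z3 : (E*E)*(F*F) = 0 := by
    rw [mul_assoc E E (F*F), ← mul_assoc E F F, hEF, zero_mul, mul_zero]
  have z4 : (E*E)*(Zs*Z) = 0 := by
    rw [mul_assoc E E (Zs*Z), ← mul_assoc E Zs Z, hEZs, zero_mul, mul_zero]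
  have hXX : ((s*t)•(Z*Zs) - (s*s)•(E*E)) * ((s*t)•(Z*Zs) - (s*s)•(E*E)) = 0 := by
    nth_rewrite 2 [hXeq]
    simp only [mul_sub, sub_mul, smul_mul_assoc, mul_smul_comm, smul_smul,
      z1, z2, z3, z4, smul_zero, sub_zero, zero_sub, neg_zero, sub_self]
  have hsZs : star Zs = Z := by rw [← hsZ, star_star]
  have hstst : star (s*t) = s*t := by rw [star_mul', hss', hts', mul_comm]
  have hstss : star (s*s) = s*s := by rw [star_mul', hss']
  have hXsa : IsSelfAdjoint ((s*t)•(Z*Zs) - (s*s)•(E*E)) := by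
    have : star ((s*t)•(Z*Zs) - (s*s)•(E*E)) = (s*t)•(Z*Zs) - (s*s)•(E*E) := by
      simp only [star_sub, star_smul, star_mul, hss', hts', hsZs, hsZ, hsE]
      module
    exact this
  have hX0 : (s*t)•(Z*Zs) - (s*s)•(E*E) = 0 := auxSaSqZero hXsa hXX
  exact ⟨sub_eq_zero.mp hA5d, sub_eq_zero.mp hX0⟩

variable (φ) in
/-- basis matrix image -/
noncomputable def ZZb (i j : n) : A := φ (outod (Pi.single i 1) (Pi.single j 1))

lemma ZZb_def (i j : n) : φ (outod (Pi.single i 1) (Pi.single j 1)) = ZZb φ i j := rfl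

lemma LB1 (hcp : IsCPMap ⇑φ) (hc : ‖φ 1‖ ≤ 1)
    (hoz : ∀ e f, IsMinProj e → IsMinProj f → e * f = 0 → φ e * φ f = 0)
    {j k : n} (h : j ≠ k) (i l : n) : ZZb φ i j * ZZb φ k l = 0 :=
  A4 hcp hc hoz (single_ne_zero' j) (single_ne_zero' k) (inn_single_ne h) _ _

lemma LB3 (hcp : IsCPMap ⇑φ) (hc : ‖φ 1‖ ≤ 1)
    (hoz : ∀ e f, IsMinProj e → IsMinProj f → e * f = 0 → φ e * φ f = 0)
    (i j : n) : ZZb φ i j * φ 1 = ZZb φ i j * ZZb φ j j := by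
  rw [one_eq_sum_outod, map_sum, Finset.mul_sum]
  rw [Finset.sum_eq_single j]
  · rfl
  · intro k _ hk
    exact A3right hcp hc hoz (single_ne_zero' j) (single_ne_zero' k)
      (inn_single_ne (fun hh => hk hh.symm)) _
  · intro hmem; exact absurd (Finset.mem_univ j) hmem

lemma LB3' (hcp : IsCPMap ⇑φ) (hc : ‖φ 1‖ ≤ 1)
    (hoz : ∀ e f, IsMinProj e → IsMinProj f → e * f = 0 → φ e * φ f = 0)
    (i j : n) : φ 1 * ZZb φ i j = ZZb φ i i * ZZb φ i j := by
  rw [one_eq_sum_outod, map_sum, Finset.sum_mul]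
  rw [Finset.sum_eq_single i]
  · rfl
  · intro k _ hk
    exact A3left hcp hc hoz (single_ne_zero' i) (single_ne_zero' k)
      (inn_single_ne (fun hh => hk hh.symm)) _
  · intro hmem; exact absurd (Finset.mem_univ i) hmem

lemma LB4 (hcp : IsCPMap ⇑φ) (hc : ‖φ 1‖ ≤ 1)
    (hoz : ∀ e f, IsMinProj e → IsMinProj f → e * f = 0 → φ e * φ f = 0)
    {i j : n} (h : i ≠ j) : ZZb φ i i * ZZb φ i j = ZZb φ i j * ZZb φ j j := by
  have h56 := (A56 hcp hc hoz (single_ne_zero' i) (single_ne_zero' j) (inn_single_ne h)).1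
  rw [inn_single_self, inn_single_self, one_smul, one_smul] at h56
  exact h56

lemma LB5 (hcp : IsCPMap ⇑φ) (hc : ‖φ 1‖ ≤ 1)
    (hoz : ∀ e f, IsMinProj e → IsMinProj f → e * f = 0 → φ e * φ f = 0)
    (i j : n) : φ 1 * ZZb φ i j = ZZb φ i j * φ 1 := by
  by_cases h : i = j
  · subst h
    rw [LB3' hcp hc hoz i i, LB3 hcp hc hoz i i]
  · rw [LB3' hcp hc hoz i j, LB4 hcp hc hoz h, LB3 hcp hc hoz i j]

lemma LB6 (hcp : IsCPMap ⇑φ) (hc : ‖φ 1‖ ≤ 1)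
    (hoz : ∀ e f, IsMinProj e → IsMinProj f → e * f = 0 → φ e * φ f = 0)
    {i j : n} (h : i ≠ j) : ZZb φ i j * ZZb φ j i = ZZb φ i i * φ 1 := by
  have h56 := (A56 hcp hc hoz (single_ne_zero' i) (single_ne_zero' j) (inn_single_ne h)).2
  rw [inn_single_self, inn_single_self] at h56
  simp only [one_mul, one_smul, ZZb_def] at h56
  rw [h56, LB3 hcp hc hoz i i]

lemma LB7 (hcp : IsCPMap ⇑φ) (hc : ‖φ 1‖ ≤ 1)
    (hoz : ∀ e f, IsMinProj e → IsMinProj f → e * f = 0 → φ e * φ f = 0)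
    {i j l : n} (hji : j ≠ i) (hjl : j ≠ l) (hil : i ≠ l) :
    ZZb φ j i * ZZb φ i l = ZZb φ j l * φ 1 := by
  have stI : star Complex.I = -Complex.I := by simp [Complex.star_def, Complex.conj_I]
  have p1 : ZZb φ j j * ZZb φ j i = ZZb φ j i * φ 1 := by
    rw [← LB3' hcp hc hoz j i, LB5 hcp hc hoz j i]
  have p2 : ZZb φ j j * ZZb φ j l = ZZb φ j l * φ 1 := by
    rw [← LB3' hcp hc hoz j l, LB5 hcp hc hoz j l]
  have p3 : ZZb φ j i * ZZb φ i i = ZZb φ j i * φ 1 := (LB3 hcp hc hoz j i).symm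
  have p4 : ZZb φ j l * ZZb φ l l = ZZb φ j l * φ 1 := (LB3 hcp hc hoz j l).symm
  have q1 : ZZb φ j i * ZZb φ l i = 0 := LB1 hcp hc hoz hil j i
  have q2 : ZZb φ j i * ZZb φ l l = 0 := LB1 hcp hc hoz hil j l
  have q3 : ZZb φ j l * ZZb φ i i = 0 := LB1 hcp hc hoz (Ne.symm hil) j i
  have q4 : ZZb φ j l * ZZb φ i l = 0 := LB1 hcp hc hoz (Ne.symm hil) j l
  have key : ∀ θ : ℂ, star θ * θ = 1 →
      ZZb φ j i * φ 1 + star θ • (ZZb φ j l * φ 1)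
        = star θ • (ZZb φ j i * ZZb φ i l) + ZZb φ j l * ZZb φ l i := by
    intro θ hθ
    have hθ' : θ * star θ = 1 := by rw [mul_comm]; exact hθ
    set u : n → ℂ := (1:ℂ) • (Pi.single i 1 : n → ℂ) + θ • (Pi.single l 1 : n → ℂ) with hu
    have hu0 : u ≠ 0 := by
      intro h0
      have h1 := congrFun h0 i
      rw [hu] at h1
      simp only [Pi.add_apply, Pi.smul_apply, Pi.single_apply, smul_eq_mul, Pi.zero_apply] at h1
      simp [hil] at h1
    have hju : inn (Pi.single j 1) u = 0 := by
      rw [hu, inn_add_right, inn_smul_right, inn_smul_right, inn_single_ne hji,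
        inn_single_ne hjl, mul_zero, mul_zero, add_zero]
    have hA := (A56 hcp hc hoz (single_ne_zero' j) hu0 hju).1
    have hinnuu : inn u u = 2 := by
      rw [hu, inn_comb (inn_single_ne hil) (inn_single_ne (Ne.symm hil)),
        inn_single_self, inn_single_self, star_one, hθ]
      ring
    have hexp1 : φ (outod (Pi.single j 1) u) = ZZb φ j i + star θ • ZZb φ j l := by
      rw [hu, outod_add_right, outod_smul_right, outod_smul_right, map_add, map_smul,
        map_smul, star_one, one_smul, ZZb_def, ZZb_def]
    have hexp2 : φ (outod u u)
        = ZZb φ i i + star θ • ZZb φ i l + θ • ZZb φ l i + ZZb φ l l := by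
      rw [hu, outod_lin, map_add, map_add, map_add, map_smul, map_smul, map_smul, map_smul,
        ZZb_def, ZZb_def, ZZb_def, ZZb_def]
      rw [star_one, hθ']
      simp only [one_smul, mul_one, one_mul]
    rw [hexp1, hexp2, hinnuu, inn_single_self, one_smul, ZZb_def] at hA
    simp only [mul_add, add_mul, smul_mul_assoc, mul_smul_comm, smul_smul, smul_add,
      p1, p2, p3, p4, q1, q2, q3, q4, smul_zero, add_zero, zero_add, hθ, hθ',
      one_smul] at hA
    linear_combination (norm := module) hA
  have E1 := key 1 (by simp)
  simp only [star_one, one_smul] at E1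
  have EI := key Complex.I (by rw [stI, neg_mul, Complex.I_mul_I, neg_neg])
  rw [stI] at EI
  have hne : (1 + Complex.I : ℂ) ≠ 0 := by
    intro hcon
    have := congrArg Complex.re hcon
    simp at this
  have hcomb : (1 + Complex.I) • (ZZb φ j l * φ 1 - ZZb φ j i * ZZb φ i l) = 0 := by
    linear_combination (norm := module) E1 - EI
  have hsub := smul_cancelC hne (x := ZZb φ j l * φ 1 - ZZb φ j i * ZZb φ i l) (y := 0)
    (by rw [hcomb, smul_zero])
  exact (sub_eq_zero.mp hsub).symm

lemma LB8 (hcp : IsCPMap ⇑φ) (hc : ‖φ 1‖ ≤ 1)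
    (hoz : ∀ e f, IsMinProj e → IsMinProj f → e * f = 0 → φ e * φ f = 0)
    (i j l : n) : ZZb φ i j * ZZb φ j l = ZZb φ i l * φ 1 := by
  by_cases hij : i = j
  · subst hij
    rw [← LB3' hcp hc hoz i l, LB5 hcp hc hoz i l]
  · by_cases hjl : j = l
    · subst hjl
      exact (LB3 hcp hc hoz i j).symm
    · by_cases hil : i = l
      · subst hil
        exact LB6 hcp hc hoz hij
      · exact LB7 hcp hc hoz hij hil hjl

lemma LBmain (hcp : IsCPMap ⇑φ) (hc : ‖φ 1‖ ≤ 1)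
    (hoz : ∀ e f, IsMinProj e → IsMinProj f → e * f = 0 → φ e * φ f = 0)
    (i j k l : n) : ZZb φ i j * ZZb φ k l
      = φ (outod (Pi.single i 1) (Pi.single j 1) * outod (Pi.single k 1) (Pi.single l 1))
          * φ 1 := by
  rw [outod_mul_outod]
  by_cases hjk : j = k
  · subst hjk
    rw [inn_single_self, one_smul, ZZb_def]
    exact LB8 hcp hc hoz i j l
  · rw [inn_single_ne hjk, zero_smul, map_zero, zero_mul]
    exact LB1 hcp hc hoz hjk i l

lemma phi_mul (hcp : IsCPMap ⇑φ) (hc : ‖φ 1‖ ≤ 1)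
    (hoz : ∀ e f, IsMinProj e → IsMinProj f → e * f = 0 → φ e * φ f = 0)
    (x y : Matrix n n ℂ) : φ x * φ y = φ (x * y) * φ 1 := by
  have hbil : (LinearMap.mul ℂ A).compl₁₂ φ φ
      = (LinearMap.mul ℂ (Matrix n n ℂ)).compr₂ ((LinearMap.mulRight ℂ (φ 1)).comp φ) := by
    refine Module.Basis.ext (Matrix.stdBasis ℂ n n) fun p => ?_
    refine Module.Basis.ext (Matrix.stdBasis ℂ n n) fun q => ?_
    simp only [LinearMap.compl₁₂_apply, LinearMap.mul_apply', LinearMap.compr₂_apply,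
      LinearMap.comp_apply, LinearMap.mulRight_apply]
    rw [Matrix.stdBasis_eq_single, Matrix.stdBasis_eq_single,
      ← outod_single_eq_std, ← outod_single_eq_std]
    exact LBmain hcp hc hoz p.1 p.2 q.1 q.2
  have h1 := LinearMap.congr_fun (LinearMap.congr_fun hbil x) y
  simpa only [LinearMap.compl₁₂_apply, LinearMap.mul_apply', LinearMap.compr₂_apply,
    LinearMap.comp_apply, LinearMap.mulRight_apply] using h1

end PhiSection

/-- If `φ₁ : M_{r₁} → A₁` and `φ₂ : M_{r₂} → A₂` are completely positive contractions of
strict order zero, then the induced map `φ₁ ⊗ φ₂ : M_{r₁} ⊗ M_{r₂} → A₁ ⊗ A₂` has strict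
order zero. -/
theorem stmt11 {A₁ A₂ : Type*}
    [NormedRing A₁] [StarRing A₁] [CStarRing A₁] [CompleteSpace A₁]
    [NormedAlgebra ℂ A₁] [StarModule ℂ A₁] [PartialOrder A₁] [StarOrderedRing A₁]
    [NormedRing A₂] [StarRing A₂] [CStarRing A₂] [CompleteSpace A₂]
    [NormedAlgebra ℂ A₂] [StarModule ℂ A₂] [PartialOrder A₂] [StarOrderedRing A₂]
    (r₁ r₂ : ℕ)
    (φ₁ : Matrix (Fin r₁) (Fin r₁) ℂ →ₗ[ℂ] A₁)
    (φ₂ : Matrix (Fin r₂) (Fin r₂) ℂ →ₗ[ℂ] A₂)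
    (hcp₁ : IsCPMap φ₁) (hc₁ : ‖φ₁ 1‖ ≤ 1)
    (hoz₁ : ∀ e f, IsMinProj e → IsMinProj f → e * f = 0 → φ₁ e * φ₁ f = 0)
    (hcp₂ : IsCPMap φ₂) (hc₂ : ‖φ₂ 1‖ ≤ 1)
    (hoz₂ : ∀ e f, IsMinProj e → IsMinProj f → e * f = 0 → φ₂ e * φ₂ f = 0)
    (ψ : Matrix (Fin r₁ × Fin r₂) (Fin r₁ × Fin r₂) ℂ →ₗ[ℂ] (A₁ ⊗[ℂ] A₂))
    (hψ : ∀ (x₁ : Matrix (Fin r₁) (Fin r₁) ℂ) (x₂ : Matrix (Fin r₂) (Fin r₂) ℂ),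
      ψ (Matrix.kroneckerMap (· * ·) x₁ x₂) = φ₁ x₁ ⊗ₜ[ℂ] φ₂ x₂) :
    ∀ e f, IsMinProj e → IsMinProj f → e * f = 0 → ψ e * ψ f = 0 := by
  letI : CStarAlgebra A₁ :=
    { ‹NormedRing A₁›, ‹StarRing A₁›, ‹CStarRing A₁›, ‹NormedAlgebra ℂ A₁›,
      ‹StarModule ℂ A₁› with complete := ‹CompleteSpace A₁›.complete }
  letI : CStarAlgebra A₂ :=
    { ‹NormedRing A₂›, ‹StarRing A₂›, ‹CStarRing A₂›, ‹NormedAlgebra ℂ A₂›,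
      ‹StarModule ℂ A₂› with complete := ‹CompleteSpace A₂›.complete }
  have hm₁ := phi_mul (φ := φ₁) hcp₁ hc₁ hoz₁
  have hm₂ := phi_mul (φ := φ₂) hcp₂ hc₂ hoz₂
  have hstd : ∀ p q : Fin r₁ × Fin r₂, (Matrix.single p q (1:ℂ))
      = Matrix.kroneckerMap (· * ·) (Matrix.single p.1 q.1 (1:ℂ))
          (Matrix.single p.2 q.2 (1:ℂ)) := by
    intro p q
    ext ⟨a,b⟩ ⟨c,d⟩
    simp only [Matrix.single, Matrix.of_apply, Matrix.kroneckerMap_apply]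
    by_cases h1 : p.1 = a <;> by_cases h2 : p.2 = b <;> by_cases h3 : q.1 = c <;>
      by_cases h4 : q.2 = d <;>
      simp [Prod.ext_iff, h1, h2, h3, h4]
  have key : ∀ X Y, ψ X * ψ Y = ψ (X * Y) * ψ 1 := by
    have hbil : (LinearMap.mul ℂ (A₁ ⊗[ℂ] A₂)).compl₁₂ ψ ψ
        = (LinearMap.mul ℂ (Matrix (Fin r₁ × Fin r₂) (Fin r₁ × Fin r₂) ℂ)).compr₂
            ((LinearMap.mulRight ℂ (ψ 1)).comp ψ) := by
      refine Module.Basis.ext (Matrix.stdBasis ℂ _ _) fun p => ?_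
      refine Module.Basis.ext (Matrix.stdBasis ℂ _ _) fun q => ?_
      simp only [LinearMap.compl₁₂_apply, LinearMap.mul_apply', LinearMap.compr₂_apply,
        LinearMap.comp_apply, LinearMap.mulRight_apply]
      rw [Matrix.stdBasis_eq_single, Matrix.stdBasis_eq_single,
        hstd p.1 p.2, hstd q.1 q.2, hψ, hψ, Algebra.TensorProduct.tmul_mul_tmul,
        hm₁, hm₂, ← Algebra.TensorProduct.tmul_mul_tmul, ← hψ, ← hψ,
        ← Matrix.mul_kronecker_mul, Matrix.one_kronecker_one]
    intro X Y
    have h1 := LinearMap.congr_fun (LinearMap.congr_fun hbil X) Y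
    simpa only [LinearMap.compl₁₂_apply, LinearMap.mul_apply', LinearMap.compr₂_apply,
      LinearMap.comp_apply, LinearMap.mulRight_apply] using h1
  intro e f _ _ hef
  rw [key e f, hef, map_zero, zero_mul]
end

section
/- Let K be a compact Hausdorff space, r ∈ ℕ, and q : K → M_r a continuous projection-valued function such that ‖q(s₁) − q(s₂)‖ < 1 for all s₁, s₂ ∈ K, with a distinguished point t ∈ K. Then there exists a continuous function w : K → M_r such that w(s)*w(s) = q(s) and w(s)w(s)* = q(t) for all s ∈ K, and w(t) = q(t); moreover w can be chosen with ‖w(s) − q(s)‖ ≤ some bound depending on sup ‖q(s) − q(t)‖. -/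
set_option linter.unusedSectionVars false
set_option maxHeartbeats 1000000

open Finset

/-! ### Combinatorial preliminaries: `cbr k = centralBinom k / 4^k` -/

noncomputable def cbr (k : ℕ) : ℝ := Nat.centralBinom k / 4 ^ k

lemma cbr_nonneg (k : ℕ) : 0 ≤ cbr k := by unfold cbr; positivity

lemma cbr_zero : cbr 0 = 1 := by simp [cbr, Nat.centralBinom_zero]

lemma cbr_rec (k : ℕ) : (2 * (k : ℝ) + 2) * cbr (k + 1) = (2 * k + 1) * cbr k := by
  have h := Nat.succ_mul_centralBinom_succ k
  have h' : ((k + 1) * Nat.centralBinom (k + 1) : ℝ) = 2 * (2 * k + 1) * Nat.centralBinom k := by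
    exact_mod_cast congrArg (Nat.cast : ℕ → ℝ) h
  unfold cbr
  field_simp
  linear_combination (2 * (4:ℝ) ^ k) * h'

lemma cbr_refl (m : ℕ) :
    ∑ k ∈ range (m + 1), ((k : ℕ) : ℝ) * (cbr k * cbr (m - k)) =
    ∑ k ∈ range (m + 1), (((m - k : ℕ)) : ℝ) * (cbr k * cbr (m - k)) := by
  rw [← Finset.sum_range_reflect (fun k => ((k : ℕ) : ℝ) * (cbr k * cbr (m - k))) (m + 1)]
  apply Finset.sum_congr rfl
  intro j hj
  have hj' : j ≤ m := Nat.lt_succ_iff.mp (Finset.mem_range.mp hj)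
  have h1 : m + 1 - 1 - j = m - j := by omega
  have h2 : m - (m - j) = j := Nat.sub_sub_self hj'
  rw [h1, h2, mul_comm (cbr (m - j)) (cbr j)]

lemma cbr_doubled (m : ℕ) :
    ∑ k ∈ range (m + 1), (2 * (k : ℝ)) * (cbr k * cbr (m - k)) =
    (m : ℝ) * ∑ k ∈ range (m + 1), cbr k * cbr (m - k) := by
  have key : ∑ k ∈ range (m + 1), (((k : ℕ) : ℝ) + ((m - k : ℕ) : ℝ)) * (cbr k * cbr (m - k)) =
      (m : ℝ) * ∑ k ∈ range (m + 1), cbr k * cbr (m - k) := by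
    rw [Finset.mul_sum]
    apply Finset.sum_congr rfl
    intro k hk
    have hk' : k ≤ m := Nat.lt_succ_iff.mp (Finset.mem_range.mp hk)
    have : ((k : ℕ) : ℝ) + ((m - k : ℕ) : ℝ) = (m : ℝ) := by
      rw [← Nat.cast_add, Nat.add_sub_cancel' hk']
    rw [this]
  calc ∑ k ∈ range (m + 1), (2 * (k : ℝ)) * (cbr k * cbr (m - k))
      = ∑ k ∈ range (m + 1), (((k:ℕ):ℝ) * (cbr k * cbr (m - k))
        + ((k:ℕ):ℝ) * (cbr k * cbr (m - k))) := by
        apply Finset.sum_congr rfl; intro k _; ring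
    _ = ∑ k ∈ range (m + 1), ((k:ℕ):ℝ) * (cbr k * cbr (m - k))
        + ∑ k ∈ range (m + 1), ((k:ℕ):ℝ) * (cbr k * cbr (m - k)) := Finset.sum_add_distrib
    _ = ∑ k ∈ range (m + 1), ((k:ℕ):ℝ) * (cbr k * cbr (m - k))
        + ∑ k ∈ range (m + 1), ((m - k:ℕ):ℝ) * (cbr k * cbr (m - k)) := by rw [cbr_refl]
    _ = ∑ k ∈ range (m + 1), (((k:ℕ):ℝ) + ((m - k:ℕ):ℝ)) * (cbr k * cbr (m - k)) := by
        rw [← Finset.sum_add_distrib]; apply Finset.sum_congr rfl; intro k _; ring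
    _ = (m : ℝ) * ∑ k ∈ range (m + 1), cbr k * cbr (m - k) := key

lemma cbr_conv (n : ℕ) : ∑ k ∈ range (n + 1), cbr k * cbr (n - k) = 1 := by
  induction n with
  | zero => simp [cbr_zero]
  | succ n ih =>
    have h1 := cbr_doubled (n + 1)
    have h2 : ∑ k ∈ range (n + 2), (2 * (k : ℝ)) * (cbr k * cbr (n + 1 - k)) =
        ∑ j ∈ range (n + 1), (2 * (j : ℝ) + 1) * (cbr j * cbr (n - j)) := by
      rw [Finset.sum_range_succ' (fun k => (2 * (k : ℝ)) * (cbr k * cbr (n + 1 - k))) (n + 1)]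
      simp only [Nat.cast_zero, mul_zero, zero_mul, add_zero]
      apply Finset.sum_congr rfl
      intro j _
      have hrec := cbr_rec j
      push_cast
      calc (2 * ((j : ℝ) + 1)) * (cbr (j + 1) * cbr (n - j))
          = ((2 * (j:ℝ) + 2) * cbr (j + 1)) * cbr (n - j) := by ring
        _ = ((2 * (j:ℝ) + 1) * cbr j) * cbr (n - j) := by rw [hrec]
        _ = (2 * (j:ℝ) + 1) * (cbr j * cbr (n - j)) := by ring
    have h3 : ∑ j ∈ range (n + 1), (2 * (j : ℝ) + 1) * (cbr j * cbr (n - j)) =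
        ((n : ℝ) + 1) * ∑ j ∈ range (n + 1), cbr j * cbr (n - j) := by
      have hd := cbr_doubled n
      calc ∑ j ∈ range (n + 1), (2 * (j : ℝ) + 1) * (cbr j * cbr (n - j))
          = ∑ j ∈ range (n + 1), ((2 * (j : ℝ)) * (cbr j * cbr (n - j)) + cbr j * cbr (n - j)) := by
            apply Finset.sum_congr rfl; intro k _; ring
        _ = ∑ j ∈ range (n + 1), (2 * (j : ℝ)) * (cbr j * cbr (n - j))
            + ∑ j ∈ range (n + 1), cbr j * cbr (n - j) := Finset.sum_add_distrib
        _ = (n : ℝ) * ∑ j ∈ range (n + 1), cbr j * cbr (n - j)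
            + ∑ j ∈ range (n + 1), cbr j * cbr (n - j) := by rw [hd]
        _ = ((n : ℝ) + 1) * ∑ j ∈ range (n + 1), cbr j * cbr (n - j) := by ring
    rw [ih, mul_one] at h3
    have hcast : ((n + 1 : ℕ) : ℝ) = (n : ℝ) + 1 := by push_cast; ring
    rw [hcast, h2, h3] at h1
    have hne : (n : ℝ) + 1 ≠ 0 := by positivity
    field_simp at h1
    linarith [h1]

lemma cbr_le_one (n : ℕ) : cbr n ≤ 1 := by
  have h := cbr_conv n
  have hmem : n ∈ range (n + 1) := Finset.self_mem_range_succ n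
  have hsingle : cbr n * cbr (n - n) ≤ ∑ k ∈ range (n + 1), cbr k * cbr (n - k) :=
    Finset.single_le_sum (fun k _ => mul_nonneg (cbr_nonneg k) (cbr_nonneg _)) hmem
  rw [h] at hsingle
  simpa [Nat.sub_self, cbr_zero] using hsingle

/-! ### The inverse square root power series in a Banach algebra -/

section isq
variable {A : Type*} [NormedRing A] [CompleteSpace A] [NormOneClass A]
  [NormedSpace ℝ A] [IsScalarTower ℝ A A] [SMulCommClass ℝ A A]

noncomputable def isq (a : A) : A := ∑' n : ℕ, cbr n • a ^ n

lemma isq_term_norm (a : A) (n : ℕ) : ‖cbr n • a ^ n‖ ≤ ‖a‖ ^ n := by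
  rw [norm_smul, Real.norm_eq_abs, abs_of_nonneg (cbr_nonneg n)]
  calc cbr n * ‖a ^ n‖ ≤ 1 * ‖a‖ ^ n :=
        mul_le_mul (cbr_le_one n) (norm_pow_le a n) (norm_nonneg _) zero_le_one
    _ = ‖a‖ ^ n := one_mul _

lemma isq_summable {a : A} (ha : ‖a‖ < 1) : Summable fun n : ℕ => cbr n • a ^ n :=
  Summable.of_norm_bounded (summable_geometric_of_norm_lt_one (by simpa using ha))
    (isq_term_norm a)

lemma isq_summable_norm {a : A} (ha : ‖a‖ < 1) : Summable fun n : ℕ => ‖cbr n • a ^ n‖ :=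
  Summable.of_nonneg_of_le (fun _ => norm_nonneg _) (isq_term_norm a)
    (summable_geometric_of_lt_one (norm_nonneg a) ha)

lemma isq_mul_isq {a : A} (ha : ‖a‖ < 1) : isq a * isq a = ∑' n : ℕ, a ^ n := by
  unfold isq
  rw [tsum_mul_tsum_eq_tsum_sum_range_of_summable_norm (isq_summable_norm ha)
    (isq_summable_norm ha)]
  congr 1
  funext n
  calc ∑ k ∈ range (n + 1), (cbr k • a ^ k) * (cbr (n - k) • a ^ (n - k))
      = ∑ k ∈ range (n + 1), (cbr k * cbr (n - k)) • a ^ n := by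
        apply Finset.sum_congr rfl
        intro k hk
        have hk' : k ≤ n := Nat.lt_succ_iff.mp (Finset.mem_range.mp hk)
        rw [smul_mul_smul_comm, ← pow_add, Nat.add_sub_cancel' hk']
    _ = (∑ k ∈ range (n + 1), cbr k * cbr (n - k)) • a ^ n := (Finset.sum_smul).symm
    _ = a ^ n := by rw [cbr_conv n, one_smul]

lemma isq_isq_mul_one_sub {a : A} (ha : ‖a‖ < 1) : isq a * isq a * (1 - a) = 1 := by
  rw [isq_mul_isq ha]
  exact geom_series_mul_neg a ha

lemma commute_isq {a x : A} (h : Commute x a) : Commute x (isq a) :=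
  Commute.tsum_right x fun n => (h.pow_right n).smul_right (cbr n)

lemma isq_star [StarRing A] [ContinuousStar A] [StarModule ℝ A] {a : A}
    (h : star a = a) : star (isq a) = isq a := by
  unfold isq
  rw [tsum_star]
  congr 1; funext n
  rw [star_smul, star_pow, h, star_trivial]

lemma isq_norm_le {a : A} (ha : ‖a‖ < 1) : ‖isq a‖ ≤ (1 - ‖a‖)⁻¹ :=
  tsum_of_norm_bounded (hasSum_geometric_of_lt_one (norm_nonneg a) ha) (isq_term_norm a)

lemma isq_sub_one_norm {a : A} (ha : ‖a‖ < 1) : ‖isq a - 1‖ ≤ ‖a‖ * (1 - ‖a‖)⁻¹ := by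
  have h0 : isq a = cbr 0 • a ^ 0 + ∑' n : ℕ, cbr (n + 1) • a ^ (n + 1) :=
    (isq_summable ha).tsum_eq_zero_add
  have h1 : isq a - 1 = ∑' n : ℕ, cbr (n + 1) • a ^ (n + 1) := by
    rw [h0, cbr_zero, pow_zero, one_smul]; abel
  rw [h1]
  have hgeom : HasSum (fun n : ℕ => ‖a‖ ^ (n + 1)) (‖a‖ * (1 - ‖a‖)⁻¹) := by
    have := (hasSum_geometric_of_lt_one (norm_nonneg a) ha).mul_left ‖a‖
    simpa only [pow_succ'] using this
  exact tsum_of_norm_bounded hgeom fun n => isq_term_norm a (n + 1)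

lemma isq_zero : isq (0 : A) = 1 := by
  unfold isq
  rw [tsum_eq_single 0 (fun n hn => by simp [zero_pow hn])]
  simp [cbr_zero]

end isq

/-! ### Projection algebra identities -/

section proj
variable {R : Type*} [Ring R] {p q : R} (hp : p * p = p) (hq : q * q = q)

include hp hq in
lemma pr1 : (q * p + (1 - q) * (1 - p)) * (p * q + (1 - p) * (1 - q)) = 1 - (p - q) ^ 2 := by
  have hp' : ∀ x : R, p * (p * x) = p * x := fun x => by rw [← mul_assoc, hp]
  have hq' : ∀ x : R, q * (q * x) = q * x := fun x => by rw [← mul_assoc, hq]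
  simp only [mul_add, add_mul, mul_sub, sub_mul, mul_one, one_mul, mul_assoc, hp, hq, hp', hq',
    sq]
  abel

include hp hq in
lemma pr2 : (p * q + (1 - p) * (1 - q)) * q = p * (p * q + (1 - p) * (1 - q)) := by
  have hp' : ∀ x : R, p * (p * x) = p * x := fun x => by rw [← mul_assoc, hp]
  have hq' : ∀ x : R, q * (q * x) = q * x := fun x => by rw [← mul_assoc, hq]
  simp only [mul_add, add_mul, mul_sub, sub_mul, mul_one, one_mul, mul_assoc, hp, hq, hp', hq']
  abel

include hp hq in
lemma pr3 : q * (p - q) ^ 2 = (p - q) ^ 2 * q := by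
  have hp' : ∀ x : R, p * (p * x) = p * x := fun x => by rw [← mul_assoc, hp]
  have hq' : ∀ x : R, q * (q * x) = q * x := fun x => by rw [← mul_assoc, hq]
  simp only [sq, mul_add, add_mul, mul_sub, sub_mul, mul_one, one_mul, mul_assoc, hp, hq, hp', hq']
  abel

include hp in
lemma pr4 : (p * q + (1 - p) * (1 - q)) - 1 = (p + p - 1) * (q - p) := by
  have hp' : ∀ x : R, p * (p * x) = p * x := fun x => by rw [← mul_assoc, hp]
  simp only [mul_add, add_mul, mul_sub, sub_mul, mul_one, one_mul, mul_assoc, hp, hp']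
  abel

include hp in
lemma pr5 : (p + p - 1) * (p + p - 1) = 1 := by
  have hp' : ∀ x : R, p * (p * x) = p * x := fun x => by rw [← mul_assoc, hp]
  simp only [mul_add, add_mul, mul_sub, sub_mul, mul_one, one_mul, mul_assoc, hp, hp']
  abel

include hp in
lemma pr6 : p * p + (1 - p) * (1 - p) = 1 := by
  simp only [mul_sub, sub_mul, mul_one, one_mul, hp]
  abel

end proj

/-! ### Key abstract theorem -/

theorem key {A : Type*} [NormedRing A] [StarRing A] [CStarRing A] [CompleteSpace A]
    [NormOneClass A] [NormedSpace ℝ A] [IsScalarTower ℝ A A] [SMulCommClass ℝ A A]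
    [StarModule ℝ A] [ContinuousStar A]
    {K : Type} [TopologicalSpace K] [CompactSpace K]
    (q : K → A) (t : K) (hqc : Continuous q)
    (hidem : ∀ s, q s * q s = q s) (hsa : ∀ s, star (q s) = q s)
    (hlt : ∀ s₁ s₂, ‖q s₁ - q s₂‖ < 1) :
    ∃ w : K → A, Continuous w ∧ (∀ s, star (w s) * w s = q s) ∧
      (∀ s, w s * star (w s) = q t) ∧ w t = q t ∧
      ∀ ε : ℝ, 0 < ε → ε < 1 → (∀ s, ‖q s - q t‖ < ε) →
        ∀ s, ‖w s - q s‖ ≤ (ε + ε ^ 2) * (1 - ε ^ 2)⁻¹ := by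
  have hd_lt : ∀ s, ‖(q t - q s) ^ 2‖ < 1 := by
    intro s
    have h1 := hlt t s
    have h2 := norm_nonneg (q t - q s)
    have h3 : ‖(q t - q s) ^ 2‖ ≤ ‖q t - q s‖ * ‖q t - q s‖ := by
      rw [sq]; exact norm_mul_le _ _
    nlinarith
  have hu_one : ∀ s, ‖q s + q s - 1‖ = 1 := by
    intro s
    have h1 : star (q s + q s - 1) * (q s + q s - 1) = 1 := by
      rw [star_sub, star_add, hsa s, star_one]; exact pr5 (hidem s)
    have h2 := CStarRing.norm_star_mul_self (x := q s + q s - 1)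
    rw [h1, norm_one] at h2
    nlinarith [norm_nonneg (q s + q s - 1)]
  have hv_sub_one : ∀ s, ‖(q t * q s + (1 - q t) * (1 - q s)) - 1‖ ≤ ‖q s - q t‖ := by
    intro s
    rw [pr4 (hidem t)]
    calc ‖(q t + q t - 1) * (q s - q t)‖ ≤ ‖q t + q t - 1‖ * ‖q s - q t‖ := norm_mul_le _ _
      _ = ‖q s - q t‖ := by rw [hu_one t, one_mul]
  have hv_lt : ∀ s, ‖1 - (q t * q s + (1 - q t) * (1 - q s))‖ < 1 := by
    intro s
    rw [norm_sub_rev]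
    exact lt_of_le_of_lt (hv_sub_one s) (hlt s t)
  have hqnorm : ∀ s, ‖q s‖ ≤ 1 := by
    intro s
    by_cases h0 : q s = 0
    · simp [h0]
    · have h := CStarRing.norm_star_mul_self (x := q s)
      rw [hsa s, hidem s] at h
      have hpos : 0 < ‖q s‖ := norm_pos_iff.mpr h0
      nlinarith
  -- self-adjointness facts
  have hDsa : ∀ s, star ((q t - q s) ^ 2) = (q t - q s) ^ 2 := by
    intro s; rw [star_pow, star_sub, hsa t, hsa s]
  have hEsa : ∀ s, star (isq ((q t - q s) ^ 2)) = isq ((q t - q s) ^ 2) :=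
    fun s => isq_star (hDsa s)
  have hVstar : ∀ s, star (q t * q s + (1 - q t) * (1 - q s))
      = q s * q t + (1 - q s) * (1 - q t) := by
    intro s
    rw [star_add, star_mul, hsa t, hsa s, star_mul, star_sub, star_sub, star_one, hsa t, hsa s]
  have hsvv : ∀ s, star (q t * q s + (1 - q t) * (1 - q s)) * (q t * q s + (1 - q t) * (1 - q s))
      = 1 - (q t - q s) ^ 2 := by
    intro s; rw [hVstar s]; exact pr1 (hidem t) (hidem s)
  have hstarw : ∀ s, star ((q t * q s + (1 - q t) * (1 - q s)) * isq ((q t - q s) ^ 2) * q s)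
      = q s * (isq ((q t - q s) ^ 2) * star (q t * q s + (1 - q t) * (1 - q s))) := by
    intro s
    rw [star_mul, star_mul, hsa s, hEsa s]
  have comQE : ∀ s, Commute (q s) (isq ((q t - q s) ^ 2)) := by
    intro s
    exact commute_isq (pr3 (hidem t) (hidem s))
  have comDE : ∀ s, Commute (1 - (q t - q s) ^ 2) (isq ((q t - q s) ^ 2)) := by
    intro s
    exact commute_isq ((Commute.one_left _).sub_left (Commute.refl _))
  have hEE : ∀ s, isq ((q t - q s) ^ 2) * isq ((q t - q s) ^ 2) * (1 - (q t - q s) ^ 2) = 1 :=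
    fun s => isq_isq_mul_one_sub (hd_lt s)
  have hEE' : ∀ s, (1 - (q t - q s) ^ 2) * (isq ((q t - q s) ^ 2) * isq ((q t - q s) ^ 2)) = 1 := by
    intro s
    have hc : Commute (1 - (q t - q s) ^ 2) (isq ((q t - q s) ^ 2) * isq ((q t - q s) ^ 2)) :=
      (comDE s).mul_right (comDE s)
    rw [hc.eq]
    exact hEE s
  refine ⟨fun s => (q t * q s + (1 - q t) * (1 - q s)) * isq ((q t - q s) ^ 2) * q s,
    ?_, ?_, ?_, ?_, ?_⟩
  · -- continuity
    haveI : Nonempty K := ⟨t⟩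
    obtain ⟨s₀, -, hs₀⟩ := IsCompact.exists_isMaxOn isCompact_univ Set.univ_nonempty
      (((continuous_const.sub hqc).pow 2).norm.continuousOn)
    have hEc : Continuous fun s => isq ((q t - q s) ^ 2) := by
      have h : Continuous fun s => ∑' n : ℕ, cbr n • ((q t - q s) ^ 2) ^ n :=
        continuous_tsum
          (fun n => (((continuous_const.sub hqc).pow 2).pow n).const_smul (cbr n))
          (summable_geometric_of_lt_one (norm_nonneg _) (hd_lt s₀))
          (fun n s => (isq_term_norm _ n).trans
            (pow_le_pow_left₀ (norm_nonneg _) (hs₀ (Set.mem_univ s)) n))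
      exact h
    have hVc : Continuous fun s => q t * q s + (1 - q t) * (1 - q s) :=
      (continuous_const.mul hqc).add (continuous_const.mul (continuous_const.sub hqc))
    exact (hVc.mul hEc).mul hqc
  · -- star w * w = q s
    intro s
    rw [hstarw s]
    calc q s * (isq ((q t - q s) ^ 2) * star (q t * q s + (1 - q t) * (1 - q s)))
          * ((q t * q s + (1 - q t) * (1 - q s)) * isq ((q t - q s) ^ 2) * q s)
        = q s * ((isq ((q t - q s) ^ 2) * (star (q t * q s + (1 - q t) * (1 - q s))
            * (q t * q s + (1 - q t) * (1 - q s)))) * (isq ((q t - q s) ^ 2) * q s)) := by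
          noncomm_ring
      _ = q s * ((isq ((q t - q s) ^ 2) * (1 - (q t - q s) ^ 2))
            * (isq ((q t - q s) ^ 2) * q s)) := by rw [hsvv s]
      _ = q s * ((isq ((q t - q s) ^ 2) * ((1 - (q t - q s) ^ 2)
            * isq ((q t - q s) ^ 2))) * q s) := by noncomm_ring
      _ = q s * ((isq ((q t - q s) ^ 2) * (isq ((q t - q s) ^ 2)
            * (1 - (q t - q s) ^ 2))) * q s) := by rw [(comDE s).eq]
      _ = q s * ((isq ((q t - q s) ^ 2) * isq ((q t - q s) ^ 2)
            * (1 - (q t - q s) ^ 2)) * q s) := by noncomm_ring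
      _ = q s * (1 * q s) := by rw [hEE s]
      _ = q s := by rw [one_mul, hidem s]
  · -- w * star w = q t
    intro s
    rw [hstarw s]
    have hQsV : q s * star (q t * q s + (1 - q t) * (1 - q s))
        = star (q t * q s + (1 - q t) * (1 - q s)) * q t := by
      have h2 := pr2 (hidem t) (hidem s)
      calc q s * star (q t * q s + (1 - q t) * (1 - q s))
          = star ((q t * q s + (1 - q t) * (1 - q s)) * q s) := by rw [star_mul, hsa s]
        _ = star (q t * (q t * q s + (1 - q t) * (1 - q s))) := by rw [h2]
        _ = star (q t * q s + (1 - q t) * (1 - q s)) * q t := by rw [star_mul, hsa t]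
    set V : A := q t * q s + (1 - q t) * (1 - q s) with hVdef
    set D : A := (q t - q s) ^ 2 with hDdef
    set E : A := isq D with hEdef
    have hUnorm : ‖1 - V‖ < 1 := hv_lt s
    set U : Aˣ := Units.oneSub (1 - V) hUnorm with hUdef
    set W : Aˣ := star U * U with hWdef
    have hUval : (U : A) = V := by rw [hUdef, Units.val_oneSub, sub_sub_cancel]
    have hW : (W : A) = 1 - D := by
      rw [hWdef, Units.val_mul, Units.coe_star, hUval]
      exact hsvv s
    have hmulone : (W : A) * (E * E) = 1 := by
      rw [hW]; exact hEE' s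
    have hEEinv : ((W⁻¹ : Aˣ) : A) = E * E :=
      Units.inv_eq_of_mul_eq_one_right hmulone
    calc V * E * q s * (q s * (E * star V))
        = V * ((E * (q s * q s)) * (E * star V)) := by noncomm_ring
      _ = V * ((E * q s) * (E * star V)) := by rw [hidem s]
      _ = V * ((E * (q s * E)) * star V) := by noncomm_ring
      _ = V * ((E * (E * q s)) * star V) := by rw [(comQE s).eq]
      _ = V * ((E * E) * (q s * star V)) := by noncomm_ring
      _ = V * ((E * E) * (star V * q t)) := by rw [hQsV]
      _ = (V * (E * E) * star V) * q t := by noncomm_ring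
      _ = ((U : A) * ((W⁻¹ : Aˣ) : A) * ((star U : Aˣ) : A)) * q t := by
          rw [hEEinv, Units.coe_star, hUval]
      _ = ((U * (W⁻¹ * star U) : Aˣ) : A) * q t := by
          rw [Units.val_mul, Units.val_mul]
          noncomm_ring
      _ = q t := by
          have hone : (U * (W⁻¹ * star U) : Aˣ) = 1 := by rw [hWdef]; group
          rw [hone, Units.val_one, one_mul]
  · -- w t = q t
    have hvt : q t * q t + (1 - q t) * (1 - q t) = 1 := pr6 (hidem t)
    have hdt : (q t - q t) ^ 2 = (0 : A) := by rw [sub_self]; exact zero_pow two_ne_zero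
    show (q t * q t + (1 - q t) * (1 - q t)) * isq ((q t - q t) ^ 2) * q t = q t
    rw [hvt, hdt, isq_zero, one_mul, one_mul]
  · -- norm bound
    intro ε hε0 hε1 hqε s
    have h1 : ‖q t - q s‖ < ε := by rw [norm_sub_rev]; exact hqε s
    have hd2 : ‖(q t - q s) ^ 2‖ ≤ ε ^ 2 := by
      have h3 : ‖(q t - q s) ^ 2‖ ≤ ‖q t - q s‖ * ‖q t - q s‖ := by
        rw [sq]; exact norm_mul_le _ _
      nlinarith [norm_nonneg (q t - q s)]
    have hden : (0:ℝ) < 1 - ε ^ 2 := by nlinarith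
    have hden' : (0:ℝ) < 1 - ‖(q t - q s) ^ 2‖ := by nlinarith
    have hinv : (1 - ‖(q t - q s) ^ 2‖)⁻¹ ≤ (1 - ε ^ 2)⁻¹ := by
      apply inv_anti₀ hden; linarith
    have hE : ‖isq ((q t - q s) ^ 2)‖ ≤ (1 - ε ^ 2)⁻¹ := (isq_norm_le (hd_lt s)).trans hinv
    have hE1 : ‖isq ((q t - q s) ^ 2) - 1‖ ≤ ε ^ 2 * (1 - ε ^ 2)⁻¹ := by
      refine (isq_sub_one_norm (hd_lt s)).trans ?_
      apply mul_le_mul hd2 hinv (by positivity) (by positivity)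
    have hV1 : ‖(q t * q s + (1 - q t) * (1 - q s)) - 1‖ ≤ ε :=
      (hv_sub_one s).trans (le_of_lt (hqε s))
    set V : A := q t * q s + (1 - q t) * (1 - q s)
    set E : A := isq ((q t - q s) ^ 2)
    have hsplit : V * E * q s - q s = (V - 1) * (E * q s) + (E - 1) * q s := by noncomm_ring
    have c1 : ‖E‖ * ‖q s‖ ≤ (1 - ε ^ 2)⁻¹ := by
      calc ‖E‖ * ‖q s‖ ≤ ‖E‖ * 1 :=
            mul_le_mul_of_nonneg_left (hqnorm s) (norm_nonneg _)
        _ = ‖E‖ := mul_one _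
        _ ≤ (1 - ε ^ 2)⁻¹ := hE
    have c2 : ‖V - 1‖ * (‖E‖ * ‖q s‖) ≤ ε * (1 - ε ^ 2)⁻¹ :=
      mul_le_mul hV1 c1 (by positivity) (le_of_lt hε0)
    have c3 : ‖E - 1‖ * ‖q s‖ ≤ ε ^ 2 * (1 - ε ^ 2)⁻¹ := by
      calc ‖E - 1‖ * ‖q s‖ ≤ ‖E - 1‖ * 1 :=
            mul_le_mul_of_nonneg_left (hqnorm s) (norm_nonneg _)
        _ = ‖E - 1‖ := mul_one _
        _ ≤ ε ^ 2 * (1 - ε ^ 2)⁻¹ := hE1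
    have t1 : ‖(V - 1) * (E * q s)‖ ≤ ‖V - 1‖ * (‖E‖ * ‖q s‖) :=
      (norm_mul_le _ _).trans (mul_le_mul_of_nonneg_left (norm_mul_le _ _) (norm_nonneg _))
    have t2 : ‖(E - 1) * q s‖ ≤ ‖E - 1‖ * ‖q s‖ := norm_mul_le _ _
    have hfin : (ε + ε ^ 2) * (1 - ε ^ 2)⁻¹ = ε * (1 - ε ^ 2)⁻¹ + ε ^ 2 * (1 - ε ^ 2)⁻¹ := by
      ring
    calc ‖V * E * q s - q s‖ = ‖(V - 1) * (E * q s) + (E - 1) * q s‖ := by rw [hsplit]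
      _ ≤ ‖(V - 1) * (E * q s)‖ + ‖(E - 1) * q s‖ := norm_add_le _ _
      _ ≤ ‖V - 1‖ * (‖E‖ * ‖q s‖) + ‖E - 1‖ * ‖q s‖ := add_le_add t1 t2
      _ ≤ ε * (1 - ε ^ 2)⁻¹ + ε ^ 2 * (1 - ε ^ 2)⁻¹ := add_le_add c2 c3
      _ = (ε + ε ^ 2) * (1 - ε ^ 2)⁻¹ := hfin.symm

/-- Let `K` be a compact Hausdorff space and `q : K → M_r` (matrices realized as operators
on `ℂ^r`) a continuous projection-valued function with `‖q(s₁) − q(s₂)‖ < 1` for all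
`s₁, s₂`, and `t ∈ K` a distinguished point.  Then there is a continuous `w : K → M_r`
with `w(s)*w(s) = q(s)`, `w(s)w(s)* = q(t)` for all `s`, and `w(t) = q(t)`; moreover `w`
can be chosen with `‖w(s) − q(s)‖ ≤ f(ε)` whenever `‖q(s) − q(t)‖ < ε` for all `s`, where
`f(ε) → 0` as `ε → 0`. -/
theorem stmt17 (r : ℕ) :
    ∃ f : ℝ → ℝ, Filter.Tendsto f (nhdsWithin 0 (Set.Ioi 0)) (nhds 0) ∧
      ∀ (K : Type) [TopologicalSpace K] [CompactSpace K] [T2Space K]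
        (q : K → (EuclideanSpace ℂ (Fin r) →L[ℂ] EuclideanSpace ℂ (Fin r))) (t : K),
        Continuous q →
        (∀ s, q s * q s = q s) → (∀ s, star (q s) = q s) →
        (∀ s₁ s₂, ‖q s₁ - q s₂‖ < 1) →
        ∃ w : K → (EuclideanSpace ℂ (Fin r) →L[ℂ] EuclideanSpace ℂ (Fin r)),
          Continuous w ∧ (∀ s, star (w s) * w s = q s) ∧
          (∀ s, w s * star (w s) = q t) ∧ w t = q t ∧
          ∀ ε : ℝ, 0 < ε → ε < 1 → (∀ s, ‖q s - q t‖ < ε) →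
            ∀ s, ‖w s - q s‖ ≤ f ε := by
  refine ⟨fun ε => (ε + ε ^ 2) * (1 - ε ^ 2)⁻¹, ?_, ?_⟩
  · have hc : ContinuousAt (fun ε : ℝ => (ε + ε ^ 2) * (1 - ε ^ 2)⁻¹) 0 := by
      have h1 : ContinuousAt (fun ε : ℝ => ε + ε ^ 2) 0 := by fun_prop
      have h2 : ContinuousAt (fun ε : ℝ => 1 - ε ^ 2) 0 := by fun_prop
      exact h1.mul (h2.inv₀ (by norm_num))
    have h3 := hc.tendsto
    norm_num at h3
    exact h3.mono_left nhdsWithin_le_nhds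
  · intro K _ _ _ q t hqc hidem hsa hlt
    rcases subsingleton_or_nontrivial (EuclideanSpace ℂ (Fin r)) with hE | hE
    · haveI : Subsingleton (EuclideanSpace ℂ (Fin r) →L[ℂ] EuclideanSpace ℂ (Fin r)) :=
        ⟨fun f g => ContinuousLinearMap.ext fun x => Subsingleton.elim _ _⟩
      refine ⟨q, hqc, fun s => Subsingleton.elim _ _, fun s => Subsingleton.elim _ _,
        Subsingleton.elim _ _, ?_⟩
      intro ε hε0 hε1 _ s
      rw [sub_self, norm_zero]
      have hden : (0:ℝ) < 1 - ε ^ 2 := by nlinarith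
      positivity
    · haveI : IsScalarTower ℝ (EuclideanSpace ℂ (Fin r) →L[ℂ] EuclideanSpace ℂ (Fin r))
          (EuclideanSpace ℂ (Fin r) →L[ℂ] EuclideanSpace ℂ (Fin r)) := by
        refine ⟨fun c x y => ?_⟩
        ext v
        simp [ContinuousLinearMap.mul_apply]
      have hrs : ∀ (c : ℝ) (x : EuclideanSpace ℂ (Fin r) →L[ℂ] EuclideanSpace ℂ (Fin r)),
          c • x = (c : ℂ) • x := fun c x => by
        rw [← algebraMap_smul ℂ c x, Complex.coe_algebraMap]
      haveI : StarModule ℝ (EuclideanSpace ℂ (Fin r) →L[ℂ] EuclideanSpace ℂ (Fin r)) := by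
        refine ⟨fun c x => ?_⟩
        rw [star_trivial c, hrs c x, hrs c (star x), star_smul, Complex.star_def,
          Complex.conj_ofReal]
      haveI : ContinuousStar (EuclideanSpace ℂ (Fin r) →L[ℂ] EuclideanSpace ℂ (Fin r)) :=
        ⟨(star_isometry (E := EuclideanSpace ℂ (Fin r) →L[ℂ] EuclideanSpace ℂ (Fin r))).continuous⟩
      exact key q t hqc hidem hsa hlt
end
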